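/- arXiv:1704.05198 — 5 statements merged into one kernel-verified Lean document; each statement's English description precedes it below -/
import Mathlib

section
/- Let 1 ≤ p < ∞ and let U ⊂ ℝ be a nonempty open bounded interval. Let u : U → ℝ be Lipschitz (hence differentiable a.e. with derivative u'), and set c := (1/|U|) ∫_U (u(x) − x) dx. Then ∫_U |u(x) − (x + c)|^p dx ≤ |U|^p ∫_U |1 − u'(x)|^p dx. -/
open MeasureTheory Set Filter Topology

lemma avg_tendsto (g : ℝ → ℝ) (hcont : Continuous g) (x : ℝ) :
    Tendsto (fun n : ℕ => (∫ t in x..(x + 1/(n+1:ℝ)), g t) / (1/(n+1:ℝ))) atTop (𝓝 (g x)) := by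
  have hG : HasDerivAt (fun y => ∫ t in x..y, g t) (g x) x :=
    intervalIntegral.integral_hasDerivAt_right (hcont.intervalIntegrable x x)
      (hcont.stronglyMeasurable.stronglyMeasurableAtFilter) hcont.continuousAt
  have hslope := hasDerivAt_iff_tendsto_slope.1 hG
  have hseq : Tendsto (fun n : ℕ => x + 1/(n+1:ℝ)) atTop (𝓝[≠] x) := by
    apply tendsto_nhdsWithin_of_tendsto_nhds_of_eventually_within
    · simpa using tendsto_const_nhds.add (tendsto_one_div_add_atTop_nhds_zero_nat (𝕜 := ℝ))
    · filter_upwards with n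
      have : (0:ℝ) < 1/(n+1:ℝ) := by positivity
      simp only [mem_compl_iff, mem_singleton_iff]
      intro hcontra
      nlinarith [hcontra]
  refine (hslope.comp hseq).congr (fun n => ?_)
  have h0 : (0:ℝ) < 1/(n+1:ℝ) := by positivity
  simp only [Function.comp_apply, slope_def_field]
  rw [intervalIntegral.integral_same, sub_zero, add_sub_cancel_left]

lemma lipschitz_ftc (g : ℝ → ℝ) (K : NNReal) (hg : LipschitzWith K g) (c d : ℝ) (hcd : c ≤ d) :
    ∫ t in c..d, deriv g t = g d - g c := by
  have hcont : Continuous g := hg.continuous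
  have hInt : ∀ x y : ℝ, IntervalIntegrable g volume x y := fun x y =>
    hcont.intervalIntegrable x y
  set h : ℕ → ℝ := fun n => 1/(n+1:ℝ) with hdef
  have hpos : ∀ n, 0 < h n := fun n => by positivity
  have htend0 : Tendsto h atTop (𝓝 0) := by
    simpa [hdef, one_div] using tendsto_one_div_add_atTop_nhds_zero_nat (𝕜 := ℝ)
  -- the difference quotient integral identity
  have e : ∀ n, ∫ t in c..d, (g (t + h n) - g t) / h n
      = (∫ t in d..(d + h n), g t) / h n - (∫ t in c..(c + h n), g t) / h n := by
    intro n
    have i1 : (∫ t in c..d, g (t + h n)) = ∫ t in (c + h n)..(d + h n), g t :=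
      intervalIntegral.integral_comp_add_right g (h n)
    have i2 : (∫ t in c..(c + h n), g t) + ∫ t in (c + h n)..(d + h n), g t
        = ∫ t in c..(d + h n), g t :=
      intervalIntegral.integral_add_adjacent_intervals (hInt _ _) (hInt _ _)
    have i3 : (∫ t in c..d, g t) + ∫ t in d..(d + h n), g t = ∫ t in c..(d + h n), g t :=
      intervalIntegral.integral_add_adjacent_intervals (hInt _ _) (hInt _ _)
    have ia : IntervalIntegrable (fun t => g (t + h n)) volume c d := by
      exact (hcont.comp (continuous_id.add continuous_const)).intervalIntegrable c d
    rw [intervalIntegral.integral_div, intervalIntegral.integral_sub ia (hInt _ _), i1]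
    have i5 : (∫ t in (c + h n)..(d + h n), g t) - ∫ t in c..d, g t
        = (∫ t in d..(d + h n), g t) - ∫ t in c..(c + h n), g t := by linarith
    rw [i5, sub_div]
  -- convergence of RHS
  have key : Tendsto (fun n => ∫ t in c..d, (g (t + h n) - g t) / h n) atTop
      (𝓝 (g d - g c)) := by
    have := (avg_tendsto g hcont d).sub (avg_tendsto g hcont c)
    exact this.congr (fun n => (e n).symm)
  -- convergence via dominated convergence
  have lim2 : Tendsto (fun n => ∫ t in Ioc c d, (g (t + h n) - g t) / h n) atTop
      (𝓝 (∫ t in Ioc c d, deriv g t)) := by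
    apply tendsto_integral_of_dominated_convergence (fun _ => (K:ℝ))
    · intro n
      exact (((hcont.comp (continuous_id.add continuous_const)).sub hcont).div_const
        _).aestronglyMeasurable
    · exact integrableOn_const measure_Ioc_lt_top.ne
    · intro n
      filter_upwards with t
      rw [Real.norm_eq_abs, abs_div, abs_of_pos (hpos n), div_le_iff₀ (hpos n)]
      have := hg.dist_le_mul (t + h n) t
      rw [Real.dist_eq, Real.dist_eq, add_sub_cancel_left, abs_of_pos (hpos n)] at this
      exact this
    · have hae : ∀ᵐ t ∂(volume.restrict (Ioc c d)), DifferentiableAt ℝ g t :=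
        ae_restrict_of_ae (hg.ae_differentiableAt)
      filter_upwards [hae] with t ht
      have hslope := hasDerivAt_iff_tendsto_slope.1 ht.hasDerivAt
      have hseq : Tendsto (fun n : ℕ => t + h n) atTop (𝓝[≠] t) := by
        apply tendsto_nhdsWithin_of_tendsto_nhds_of_eventually_within
        · simpa using tendsto_const_nhds.add htend0
        · filter_upwards with n
          simp only [mem_compl_iff, mem_singleton_iff]
          intro hcontra
          nlinarith [hpos n, hcontra]
      refine (hslope.comp hseq).congr (fun n => ?_)
      simp only [Function.comp_apply, slope_def_field, add_sub_cancel_left]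
  have eq1 : ∀ n, ∫ t in Ioc c d, (g (t + h n) - g t) / h n
      = ∫ t in c..d, (g (t + h n) - g t) / h n := fun n =>
    (intervalIntegral.integral_of_le hcd).symm
  rw [intervalIntegral.integral_of_le hcd]
  exact tendsto_nhds_unique ((lim2.congr eq1)) key

theorem stmt_0 (p : ℝ) (hp : 1 ≤ p) (a b : ℝ) (hab : a < b)
    (u : ℝ → ℝ) (K : NNReal) (hu : LipschitzOnWith K u (Ioo a b)) :
    (∫ x in Ioo a b, |u x - (x + (b - a)⁻¹ * ∫ y in Ioo a b, (u y - y))| ^ p)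
      ≤ (b - a) ^ p * ∫ x in Ioo a b, |1 - deriv u x| ^ p := by
  have hba : (0:ℝ) < b - a := by linarith
  have hp0 : (0:ℝ) < p := by linarith
  obtain ⟨g₀, hg₀, heq⟩ := hu.extend_real
  set w : ℝ → ℝ := fun x => g₀ x - x with hwdef
  have hw : LipschitzWith (K + 1) w := by
    simpa using hg₀.sub (LipschitzWith.id (α := ℝ))
  have hwc : Continuous w := hw.continuous
  -- a.e. derivative of w
  have hdwae : ∀ᵐ t, deriv w t = deriv g₀ t - 1 := by
    filter_upwards [hg₀.ae_differentiableAt (μ := volume)] with t ht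
    rw [hwdef]
    rw [deriv_fun_sub (g := fun x => x) ht differentiableAt_id]
    simp
  -- bound on deriv g₀
  have hdgb : ∀ t, |deriv g₀ t| ≤ (K:ℝ) := by
    intro t
    by_cases hd : DifferentiableAt ℝ g₀ t
    · have h1 : deriv g₀ t = fderiv ℝ g₀ t 1 := by
        exact fderiv_apply_one_eq_deriv.symm
      have h2 : ‖fderiv ℝ g₀ t 1‖ ≤ ‖fderiv ℝ g₀ t‖ * ‖(1:ℝ)‖ := (fderiv ℝ g₀ t).le_opNorm 1
      have h3 : ‖fderiv ℝ g₀ t‖ ≤ (K:ℝ) := norm_fderiv_le_of_lipschitz ℝ hg₀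
      rw [← Real.norm_eq_abs, h1]
      simpa using h2.trans (by simpa using h3)
    · rw [deriv_zero_of_not_differentiableAt hd]
      simp
  have hbd : ∀ t, |deriv g₀ t - 1| ≤ (K:ℝ) + 1 := fun t => by
    have := hdgb t
    have := abs_sub_abs_le_abs_sub (deriv g₀ t) 1
    have h1 := abs_sub (deriv g₀ t) 1
    calc |deriv g₀ t - 1| ≤ |deriv g₀ t| + |(1:ℝ)| := abs_sub _ _
      _ ≤ (K:ℝ) + 1 := by simp [abs_one]; linarith [hdgb t]
  -- measurability and integrability of |deriv g₀ - 1|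
  have hmeas : Measurable (fun t => |deriv g₀ t - 1|) :=
    ((measurable_deriv g₀).sub measurable_const).abs
  have hfin : volume (Ioo a b) < ⊤ := measure_Ioo_lt_top
  have intg : IntegrableOn (fun t => |deriv g₀ t - 1|) (Ioo a b) volume := by
    refine Integrable.mono'
      (integrableOn_const hfin.ne : IntegrableOn (fun _ => (K:ℝ)+1) (Ioo a b) volume)
      hmeas.aestronglyMeasurable ?_
    filter_upwards with t
    rw [Real.norm_eq_abs, abs_abs]
    exact hbd t
  set A : ℝ := ∫ t in Ioo a b, |deriv g₀ t - 1| with hAdef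
  have hA0 : 0 ≤ A := setIntegral_nonneg measurableSet_Ioo (fun t _ => abs_nonneg _)
  -- FTC bound: |w x - w y| ≤ A for x y in Ioo a b
  have hkey : ∀ x ∈ Ioo a b, ∀ y ∈ Ioo a b, y ≤ x → |w x - w y| ≤ A := by
    intro x hx y hy hyx
    have hftc : ∫ t in y..x, deriv w t = w x - w y := lipschitz_ftc w (K+1) hw y x hyx
    have hcongr : ∫ t in y..x, deriv w t = ∫ t in y..x, (deriv g₀ t - 1) := by
      apply intervalIntegral.integral_congr_ae
      filter_upwards [hdwae] with t ht _
      exact ht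
    rw [← hftc, hcongr]
    have h1 : |∫ t in y..x, (deriv g₀ t - 1)| ≤ ∫ t in y..x, |deriv g₀ t - 1| :=
      intervalIntegral.abs_integral_le_integral_abs hyx
    refine h1.trans ?_
    rw [intervalIntegral.integral_of_le hyx]
    refine setIntegral_mono_set intg ?_ ?_
    · filter_upwards with t; exact abs_nonneg _
    · refine HasSubset.Subset.eventuallyLE (fun t ht => ?_)
      exact ⟨lt_of_lt_of_le hy.1 (le_of_lt ht.1), lt_of_le_of_lt ht.2 hx.2⟩
  have hkey' : ∀ x ∈ Ioo a b, ∀ y ∈ Ioo a b, |w x - w y| ≤ A := by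
    intro x hx y hy
    rcases le_total y x with h | h
    · exact hkey x hx y hy h
    · rw [abs_sub_comm]; exact hkey y hy x hx h
  -- rewrite the constant
  have hc0 : (∫ y in Ioo a b, (u y - y)) = ∫ y in Ioo a b, w y :=
    setIntegral_congr_fun measurableSet_Ioo (fun y hy => by rw [heq hy])
  set c₀ : ℝ := (b - a)⁻¹ * ∫ y in Ioo a b, (u y - y) with hc₀def
  have vol : (volume (Ioo a b)).toReal = b - a := by
    rw [Real.volume_Ioo, ENNReal.toReal_ofReal (by linarith)]
  have intw : IntegrableOn w (Ioo a b) volume :=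
    (hwc.integrableOn_Icc).mono_set Ioo_subset_Icc_self
  -- pointwise bound
  have hpoint : ∀ x ∈ Ioo a b, |u x - (x + c₀)| ≤ A := by
    intro x hx
    have e1 : u x - (x + c₀) = w x - c₀ := by rw [heq hx, hwdef]; ring
    have e2 : w x - c₀ = (b - a)⁻¹ * ∫ y in Ioo a b, (w x - w y) := by
      rw [integral_sub (integrableOn_const hfin.ne : IntegrableOn (fun _ : ℝ => w x) (Ioo a b) volume) intw, setIntegral_const, measureReal_def, vol,
        hc₀def, hc0, smul_eq_mul]
      field_simp
    rw [e1, e2, abs_mul, abs_of_pos (inv_pos.2 hba)]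
    have h3 : |∫ y in Ioo a b, (w x - w y)| ≤ ∫ y in Ioo a b, |w x - w y| := by
      simpa [Real.norm_eq_abs] using
        norm_integral_le_integral_norm (μ := volume.restrict (Ioo a b)) (fun y => w x - w y)
    have h4 : (∫ y in Ioo a b, |w x - w y|) ≤ ∫ _y in Ioo a b, A := by
      refine setIntegral_mono_on ?_ (integrableOn_const hfin.ne) measurableSet_Ioo
        (fun y hy => hkey' x hx y hy)
      exact ((continuous_const.sub hwc).abs.integrableOn_Icc).mono_set Ioo_subset_Icc_self
    have h5 : (∫ _y in Ioo a b, A) = (b - a) * A := by rw [setIntegral_const, measureReal_def, vol, smul_eq_mul]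
    calc (b - a)⁻¹ * |∫ y in Ioo a b, (w x - w y)|
        ≤ (b - a)⁻¹ * ((b - a) * A) := by
          refine mul_le_mul_of_nonneg_left (h3.trans (h4.trans (le_of_eq h5))) ?_
          positivity
      _ = A := by field_simp
  -- measurability / integrability of the LHS integrand
  have fmeq : (fun x => |w x - c₀| ^ p) =ᵐ[volume.restrict (Ioo a b)]
      (fun x => |u x - (x + c₀)| ^ p) := by
    filter_upwards [ae_restrict_mem measurableSet_Ioo] with x hx
    rw [heq hx, hwdef]
    have : g₀ x - x - c₀ = g₀ x - (x + c₀) := by ring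
    rw [this]
  have fmeas : AEStronglyMeasurable (fun x => |u x - (x + c₀)| ^ p)
      (volume.restrict (Ioo a b)) := by
    refine AEStronglyMeasurable.congr ?_ fmeq
    exact (((hwc.sub continuous_const).abs.measurable).pow_const p).aestronglyMeasurable
  have lhs_int : IntegrableOn (fun x => |u x - (x + c₀)| ^ p) (Ioo a b) volume := by
    refine Integrable.mono'
      (integrableOn_const hfin.ne : IntegrableOn (fun _ => A ^ p) (Ioo a b) volume)
      fmeas ?_
    filter_upwards [ae_restrict_mem measurableSet_Ioo] with x hx
    rw [Real.norm_eq_abs, abs_of_nonneg (Real.rpow_nonneg (abs_nonneg _) p)]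
    exact Real.rpow_le_rpow (abs_nonneg _) (hpoint x hx) hp0.le
  have step1 : (∫ x in Ioo a b, |u x - (x + c₀)| ^ p) ≤ (b - a) * A ^ p := by
    have h := setIntegral_mono_on lhs_int
      (integrableOn_const hfin.ne : IntegrableOn (fun _ => A ^ p) (Ioo a b) volume)
      measurableSet_Ioo
      (fun x hx => Real.rpow_le_rpow (abs_nonneg _) (hpoint x hx) hp0.le)
    refine h.trans (le_of_eq ?_)
    rw [setIntegral_const, measureReal_def, vol, smul_eq_mul]
  have hBnn : (0:ℝ) ≤ ∫ t in Ioo a b, |deriv g₀ t - 1| ^ p :=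
    setIntegral_nonneg measurableSet_Ioo fun t _ => Real.rpow_nonneg (abs_nonneg _) _
  have hBeq : (∫ t in Ioo a b, |deriv g₀ t - 1| ^ p)
      = ∫ x in Ioo a b, |1 - deriv u x| ^ p := by
    refine setIntegral_congr_fun measurableSet_Ioo (fun x hx => ?_)
    have hud : deriv u x = deriv g₀ x := by
      apply Filter.EventuallyEq.deriv_eq
      filter_upwards [isOpen_Ioo.mem_nhds hx] with y hy
      exact heq hy
    rw [hud, abs_sub_comm]
  -- Hölder step
  have step2 : A ^ p ≤ (b - a) ^ (p - 1) * ∫ t in Ioo a b, |deriv g₀ t - 1| ^ p := by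
    rcases eq_or_lt_of_le hp with hp1 | hp1
    · rw [← hp1, sub_self, Real.rpow_zero, one_mul, Real.rpow_one]
      calc A = ∫ t in Ioo a b, |deriv g₀ t - 1| ^ (1:ℝ) :=
            setIntegral_congr_fun measurableSet_Ioo fun t _ => (Real.rpow_one _).symm
        _ ≤ _ := le_rfl
    · have hpne : p ≠ 0 := ne_of_gt hp0
      have hp1ne : p - 1 ≠ 0 := by intro h; apply absurd hp1; simp [show p = 1 by linarith]
      set q : ℝ := p / (p - 1) with hqdef
      have hpq : p.HolderConjugate q := by
        rw [hqdef]; exact Real.HolderConjugate.conjExponent hp1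
      haveI : IsFiniteMeasure (volume.restrict (Ioo a b)) :=
        ⟨by rw [Measure.restrict_apply_univ]; exact hfin⟩
      have hf : MemLp (fun t => |deriv g₀ t - 1|) (ENNReal.ofReal p)
          (volume.restrict (Ioo a b)) :=
        MemLp.of_bound hmeas.aestronglyMeasurable ((K:ℝ)+1)
          (Filter.Eventually.of_forall fun t => by
            rw [Real.norm_eq_abs, abs_abs]; exact hbd t)
      have hone : MemLp (fun _ : ℝ => (1:ℝ)) (ENNReal.ofReal q) (volume.restrict (Ioo a b)) :=
        memLp_const 1
      have holder := integral_mul_le_Lp_mul_Lq_of_nonneg hpq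
        (Filter.Eventually.of_forall fun t => abs_nonneg _)
        (Filter.Eventually.of_forall fun _ => zero_le_one) hf hone
      simp only [mul_one, Real.one_rpow] at holder
      have hvol1 : (∫ _t : ℝ, (1:ℝ) ∂(volume.restrict (Ioo a b))) = b - a := by
        rw [integral_const, measureReal_def, smul_eq_mul, mul_one, Measure.restrict_apply_univ, vol]
      rw [hvol1] at holder
      have h6 : A ^ p ≤ ((∫ t in Ioo a b, |deriv g₀ t - 1| ^ p) ^ (1/p) * (b - a) ^ (1/q)) ^ p :=
        Real.rpow_le_rpow hA0 holder hp0.le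
      refine h6.trans (le_of_eq ?_)
      rw [Real.mul_rpow (Real.rpow_nonneg hBnn _) (Real.rpow_nonneg hba.le _),
        ← Real.rpow_mul hBnn, ← Real.rpow_mul hba.le,
        one_div, inv_mul_cancel₀ hpne, Real.rpow_one,
        show 1 / q * p = p - 1 by rw [hqdef]; field_simp]
      ring
  calc (∫ x in Ioo a b, |u x - (x + c₀)| ^ p) ≤ (b - a) * A ^ p := step1
    _ ≤ (b - a) * ((b - a) ^ (p - 1) * ∫ t in Ioo a b, |deriv g₀ t - 1| ^ p) :=
        mul_le_mul_of_nonneg_left step2 hba.le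
    _ = (b - a) ^ p * ∫ t in Ioo a b, |deriv g₀ t - 1| ^ p := by
        rw [← mul_assoc]
        congr 1
        rw [show p = 1 + (p - 1) by ring, Real.rpow_add hba, Real.rpow_one]
        ring_nf
    _ = (b - a) ^ p * ∫ x in Ioo a b, |1 - deriv u x| ^ p := by rw [hBeq]
end

section
/- Let A be a real n×n matrix with det A > 0, and let 0 < a_1 ≤ ⋯ ≤ a_n be the singular values of A (the eigenvalues of the positive square root of A Aᵀ). Then dist²(A, SL(n)) = min{ Σ_{j=1}^n (c_j − a_j)² : c_j > 0 for all j and Π_{j=1}^n c_j = 1 }, and moreover this minimum is attained by some (d_1,…,d_n) with 0 < d_1 ≤ ⋯ ≤ d_n and Π_{j=1}^n d_j = 1. -/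
open Matrix

noncomputable section

/-- Frobenius norm of a real square matrix. -/
def frob {ι : Type*} [Fintype ι] (A : Matrix ι ι ℝ) : ℝ :=
  Real.sqrt (∑ i, ∑ j, (A i j) ^ 2)

/-- Frobenius distance from a matrix to `SL(n)`. -/
def distSL {n : ℕ} (A : Matrix (Fin n) (Fin n) ℝ) : ℝ :=
  sInf {r : ℝ | ∃ B : Matrix (Fin n) (Fin n) ℝ, B.det = 1 ∧ r = frob (A - B)}

namespace SL7

variable {n : ℕ}

def frobSq {ι : Type*} [Fintype ι] (X : Matrix ι ι ℝ) : ℝ := ∑ i, ∑ j, (X i j) ^ 2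

lemma frobSq_nonneg {ι : Type*} [Fintype ι] (X : Matrix ι ι ℝ) : 0 ≤ frobSq X :=
  Finset.sum_nonneg fun _ _ => Finset.sum_nonneg fun _ _ => sq_nonneg _

lemma frob_eq_sqrt {ι : Type*} [Fintype ι] (X : Matrix ι ι ℝ) :
    frob X = Real.sqrt (frobSq X) := rfl

lemma frob_sq {ι : Type*} [Fintype ι] (X : Matrix ι ι ℝ) : frob X ^ 2 = frobSq X := by
  rw [frob_eq_sqrt, Real.sq_sqrt (frobSq_nonneg X)]

lemma frob_nonneg {ι : Type*} [Fintype ι] (X : Matrix ι ι ℝ) : 0 ≤ frob X :=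
  Real.sqrt_nonneg _

lemma frobSq_eq_trace (X : Matrix (Fin n) (Fin n) ℝ) : frobSq X = trace (Xᵀ * X) := by
  simp only [frobSq, trace, Matrix.mul_apply, diag_apply, transpose_apply, sq]
  rw [Finset.sum_comm]

lemma frobSq_eq_trace' (X : Matrix (Fin n) (Fin n) ℝ) : frobSq X = trace (X * Xᵀ) := by
  simp only [frobSq, trace, Matrix.mul_apply, diag_apply, transpose_apply, sq]

lemma frobSq_mul_left {U X : Matrix (Fin n) (Fin n) ℝ} (hU : Uᵀ * U = 1) :
    frobSq (U * X) = frobSq X := by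
  rw [frobSq_eq_trace, frobSq_eq_trace, transpose_mul]
  rw [show Xᵀ * Uᵀ * (U * X) = Xᵀ * (Uᵀ * U) * X by noncomm_ring, hU, Matrix.mul_one]

lemma frobSq_mul_right {U X : Matrix (Fin n) (Fin n) ℝ} (hU : U * Uᵀ = 1) :
    frobSq (X * U) = frobSq X := by
  rw [frobSq_eq_trace', frobSq_eq_trace', transpose_mul]
  rw [show X * U * (Uᵀ * Xᵀ) = X * (U * Uᵀ) * Xᵀ by noncomm_ring, hU, Matrix.mul_one]

/-- decomposition of a nonneg monotone tuple as a sum of step functions with nonneg weights -/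
lemma exists_delta (a : Fin n → ℝ) (hmono : Monotone a) (h0 : ∀ i, 0 ≤ a i) :
    ∃ δ : Fin n → ℝ, (∀ p, 0 ≤ δ p) ∧ ∀ i, a i = ∑ p, if p ≤ i then δ p else 0 := by
  set δ : Fin n → ℝ :=
    fun p => a p - (if h : 0 < (p : ℕ) then a ⟨p.1 - 1, by omega⟩ else 0) with hδ
  refine ⟨δ, ?_, ?_⟩
  · intro p
    by_cases h : 0 < (p : ℕ)
    · simp only [hδ, h, dif_pos]
      have : (⟨p.1 - 1, by omega⟩ : Fin n) ≤ p := by simp [Fin.le_def]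
      linarith [hmono this]
    · simp only [hδ, h, dif_neg]
      simpa using h0 p
  · intro i
    obtain ⟨m, hm⟩ := i
    induction m with
    | zero =>
      rw [Finset.sum_eq_single (⟨0, hm⟩ : Fin n)]
      · simp [hδ]
      · intro p _ hp
        rw [if_neg]
        intro hle
        exact hp (le_antisymm (by simpa [Fin.le_def] using hle) (by simp [Fin.le_def]))
      · simp
    | succ m ih =>
      have hm' : m < n := by omega
      have step : ∀ p : Fin n, (if p ≤ (⟨m + 1, hm⟩ : Fin n) then δ p else 0)
          = (if p ≤ (⟨m, hm'⟩ : Fin n) then δ p else 0)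
            + (if p = (⟨m + 1, hm⟩ : Fin n) then δ p else 0) := by
        intro p
        simp only [Fin.le_def, Fin.ext_iff]
        split_ifs <;> first | (exfalso; omega) | ring
      rw [Finset.sum_congr rfl fun p _ => step p, Finset.sum_add_distrib, ← ih hm',
        Finset.sum_ite_eq' Finset.univ (⟨m + 1, hm⟩ : Fin n)]
      simp only [Finset.mem_univ, if_pos]
      have hv : δ (⟨m + 1, hm⟩ : Fin n) = a ⟨m + 1, hm⟩ - a ⟨m, hm'⟩ := by
        simp only [hδ]
        rw [dif_pos (by simp)]
        congr 1
      rw [hv]; ring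


lemma ds_bound (a d : Fin n → ℝ) (hamono : Monotone a) (hdmono : Monotone d)
    (ha0 : ∀ i, 0 ≤ a i) (hd0 : ∀ i, 0 ≤ d i)
    (S : Matrix (Fin n) (Fin n) ℝ) (hS0 : ∀ i k, 0 ≤ S i k)
    (hrow : ∀ i, ∑ k, S i k ≤ 1) (hcol : ∀ k, ∑ i, S i k ≤ 1) :
    ∑ i, ∑ k, S i k * (a i * d k) ≤ ∑ i, a i * d i := by
  obtain ⟨δ, hδ0, hδ⟩ := exists_delta a hamono ha0
  obtain ⟨ε, hε0, hε⟩ := exists_delta d hdmono hd0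
  set ind : Fin n → Fin n → ℝ := fun p i => if p ≤ i then 1 else 0 with hind
  have hind0 : ∀ p i, 0 ≤ ind p i := by
    intro p i; simp only [hind]; split_ifs <;> norm_num
  have hind1 : ∀ p i, ind p i ≤ 1 := by
    intro p i; simp only [hind]; split_ifs <;> norm_num
  have ha : ∀ i, a i = ∑ p, δ p * ind p i := by
    intro i; rw [hδ i]
    exact Finset.sum_congr rfl fun p _ => by
      simp only [hind, mul_ite, mul_one, mul_zero]
  have hd : ∀ k, d k = ∑ q, ε q * ind q k := by
    intro k; rw [hε k]
    exact Finset.sum_congr rfl fun q _ => by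
      simp only [hind, mul_ite, mul_one, mul_zero]
  have expand : ∀ T : Matrix (Fin n) (Fin n) ℝ,
      ∑ i, ∑ k, T i k * (a i * d k)
        = ∑ p, ∑ q, δ p * ε q * (∑ i, ∑ k, T i k * (ind p i * ind q k)) := by
    intro T
    have h1 : ∀ i k, T i k * (a i * d k)
        = ∑ p, ∑ q, δ p * ε q * (T i k * (ind p i * ind q k)) := by
      intro i k
      rw [ha i, hd k, Finset.sum_mul_sum, Finset.mul_sum]
      refine Finset.sum_congr rfl fun p _ => ?_
      rw [Finset.mul_sum]
      exact Finset.sum_congr rfl fun q _ => by ring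
    calc ∑ i, ∑ k, T i k * (a i * d k)
        = ∑ i, ∑ k, ∑ p, ∑ q, δ p * ε q * (T i k * (ind p i * ind q k)) := by
          exact Finset.sum_congr rfl fun i _ => Finset.sum_congr rfl fun k _ => h1 i k
      _ = ∑ i, ∑ p, ∑ k, ∑ q, δ p * ε q * (T i k * (ind p i * ind q k)) :=
          Finset.sum_congr rfl fun i _ => Finset.sum_comm
      _ = ∑ p, ∑ i, ∑ k, ∑ q, δ p * ε q * (T i k * (ind p i * ind q k)) :=
          Finset.sum_comm
      _ = ∑ p, ∑ i, ∑ q, ∑ k, δ p * ε q * (T i k * (ind p i * ind q k)) :=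
          Finset.sum_congr rfl fun p _ => Finset.sum_congr rfl fun i _ =>
            Finset.sum_comm
      _ = ∑ p, ∑ q, ∑ i, ∑ k, δ p * ε q * (T i k * (ind p i * ind q k)) :=
          Finset.sum_congr rfl fun p _ => Finset.sum_comm
      _ = ∑ p, ∑ q, δ p * ε q * (∑ i, ∑ k, T i k * (ind p i * ind q k)) := by
          refine Finset.sum_congr rfl fun p _ => Finset.sum_congr rfl fun q _ => ?_
          rw [Finset.mul_sum]
          refine Finset.sum_congr rfl fun i _ => ?_
          rw [Finset.mul_sum]
  have hone : ∀ i, ∑ k, (1 : Matrix (Fin n) (Fin n) ℝ) i k * (a i * d k) = a i * d i := by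
    intro i
    rw [Finset.sum_eq_single i]
    · simp [Matrix.one_apply]
    · intro k _ hk; simp [Matrix.one_apply, (Ne.symm hk)]
    · simp
  have honeR : ∀ p q i, ∑ k, (1 : Matrix (Fin n) (Fin n) ℝ) i k * (ind p i * ind q k)
      = ind p i * ind q i := by
    intro p q i
    rw [Finset.sum_eq_single i]
    · simp [Matrix.one_apply]
    · intro k _ hk; simp [Matrix.one_apply, (Ne.symm hk)]
    · simp
  have key : ∀ p q, ∑ i, ∑ k, S i k * (ind p i * ind q k)
      ≤ ∑ i, ∑ k, (1 : Matrix (Fin n) (Fin n) ℝ) i k * (ind p i * ind q k) := by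
    intro p q
    have hRHS : ∑ i, ∑ k, (1 : Matrix (Fin n) (Fin n) ℝ) i k * (ind p i * ind q k)
        = ∑ i, ind p i * ind q i := Finset.sum_congr rfl fun i _ => honeR p q i
    rw [hRHS]
    rcases le_total p q with hpq | hqp
    · have hii : ∀ i, ind p i * ind q i = ind q i := by
        intro i
        by_cases h : q ≤ i
        · simp [hind, h, le_trans hpq h]
        · simp [hind, h]
      rw [Finset.sum_congr rfl fun i _ => hii i]
      have step1 : ∑ i, ∑ k, S i k * (ind p i * ind q k) ≤ ∑ i, ∑ k, S i k * ind q k := by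
        refine Finset.sum_le_sum fun i _ => Finset.sum_le_sum fun k _ => ?_
        have : ind p i * ind q k ≤ 1 * ind q k :=
          mul_le_mul_of_nonneg_right (hind1 p i) (hind0 q k)
        rw [one_mul] at this
        exact mul_le_mul_of_nonneg_left this (hS0 i k)
      refine step1.trans ?_
      rw [Finset.sum_comm]
      have : ∀ k, ∑ i, S i k * ind q k ≤ ind q k := by
        intro k
        rw [← Finset.sum_mul]
        calc (∑ i, S i k) * ind q k ≤ 1 * ind q k :=
              mul_le_mul_of_nonneg_right (hcol k) (hind0 q k)
          _ = ind q k := one_mul _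
      exact Finset.sum_le_sum fun k _ => this k
    · have hii : ∀ i, ind p i * ind q i = ind p i := by
        intro i
        by_cases h : p ≤ i
        · simp [hind, h, le_trans hqp h]
        · simp [hind, h]
      rw [Finset.sum_congr rfl fun i _ => hii i]
      have step1 : ∑ i, ∑ k, S i k * (ind p i * ind q k) ≤ ∑ i, ∑ k, S i k * ind p i := by
        refine Finset.sum_le_sum fun i _ => Finset.sum_le_sum fun k _ => ?_
        have : ind p i * ind q k ≤ ind p i * 1 :=
          mul_le_mul_of_nonneg_left (hind1 q k) (hind0 p i)
        rw [mul_one] at this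
        exact mul_le_mul_of_nonneg_left this (hS0 i k)
      refine step1.trans ?_
      have : ∀ i, ∑ k, S i k * ind p i ≤ ind p i := by
        intro i
        rw [← Finset.sum_mul]
        calc (∑ k, S i k) * ind p i ≤ 1 * ind p i :=
              mul_le_mul_of_nonneg_right (hrow i) (hind0 p i)
          _ = ind p i := one_mul _
      exact Finset.sum_le_sum fun i _ => this i
  calc ∑ i, ∑ k, S i k * (a i * d k)
      = ∑ p, ∑ q, δ p * ε q * (∑ i, ∑ k, S i k * (ind p i * ind q k)) := expand S
    _ ≤ ∑ p, ∑ q, δ p * ε q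
          * (∑ i, ∑ k, (1 : Matrix (Fin n) (Fin n) ℝ) i k * (ind p i * ind q k)) := by
        refine Finset.sum_le_sum fun p _ => Finset.sum_le_sum fun q _ => ?_
        exact mul_le_mul_of_nonneg_left (key p q) (mul_nonneg (hδ0 p) (hε0 q))
    _ = ∑ i, ∑ k, (1 : Matrix (Fin n) (Fin n) ℝ) i k * (a i * d k) := (expand 1).symm
    _ = ∑ i, a i * d i := Finset.sum_congr rfl fun i _ => hone i


lemma key_c (a : Fin n → ℝ) (hapos : ∀ i, 0 < a i) (hmono : Monotone a)
    (B : Matrix (Fin n) (Fin n) ℝ) (hB : B.det = 1) :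
    ∃ c : Fin n → ℝ, Monotone c ∧ (∀ j, 0 < c j) ∧ (∏ j, c j) = 1 ∧
      ∑ j, (c j - a j) ^ 2 ≤ frobSq (Matrix.diagonal a - B) := by
  classical
  have hHerm : (Bᴴ * B).IsHermitian := isHermitian_conjTranspose_mul_self B
  have hBt : Bᴴ = Bᵀ := conjTranspose_eq_transpose_of_trivial B
  set eig : Fin n → ℝ := hHerm.eigenvalues with heig
  have heig0 : ∀ i, 0 ≤ eig i := fun i => eigenvalues_conjTranspose_mul_self_nonneg B i
  have hdetH : (Bᴴ * B).det = 1 := by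
    rw [det_mul, det_conjTranspose, hB]; simp
  have hprod : ∏ i, eig i = 1 := by
    have h := hHerm.det_eq_prod_eigenvalues
    rw [hdetH] at h
    exact_mod_cast h.symm
  have heigpos : ∀ i, 0 < eig i := by
    intro i
    rcases (heig0 i).lt_or_eq with h | h
    · exact h
    · exfalso
      have h0 : ∏ j, eig j = 0 := Finset.prod_eq_zero (Finset.mem_univ i) h.symm
      rw [hprod] at h0; norm_num at h0
  set s : Fin n → ℝ := fun i => Real.sqrt (eig i) with hs
  have hspos : ∀ i, 0 < s i := fun i => Real.sqrt_pos.2 (heigpos i)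
  have hssq : ∀ i, s i ^ 2 = eig i := fun i => Real.sq_sqrt (heig0 i)
  have hsprod : ∏ i, s i = 1 := by
    have h2 : (∏ i, s i) ^ 2 = 1 := by
      rw [← Finset.prod_pow]
      simp_rw [hssq]; exact hprod
    have hpos : 0 < ∏ i, s i := Finset.prod_pos fun i _ => hspos i
    nlinarith [h2, hpos]
  set V : Matrix (Fin n) (Fin n) ℝ := (hHerm.eigenvectorUnitary : Matrix (Fin n) (Fin n) ℝ)
    with hVdef
  have hVmem := (hHerm.eigenvectorUnitary).2
  have hstar : ∀ X : Matrix (Fin n) (Fin n) ℝ, star X = Xᵀ := fun X => by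
    rw [Matrix.star_eq_conjTranspose, conjTranspose_eq_transpose_of_trivial]
  have hVtV : Vᵀ * V = 1 := by
    rw [← hstar V]
    exact Matrix.mem_unitaryGroup_iff'.mp hVmem
  have hVVt : V * Vᵀ = 1 := by
    rw [← hstar V]
    exact Matrix.mem_unitaryGroup_iff.mp hVmem
  have hdiag : Vᵀ * (Bᵀ * B) * V = Matrix.diagonal eig := by
    have h := hHerm.conjStarAlgAut_star_eigenvectorUnitary
    rw [Unitary.conjStarAlgAut_star_apply] at h
    calc Vᵀ * (Bᵀ * B) * V = star V * (Bᴴ * B) * V := by rw [hstar V, hBt]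
      _ = Matrix.diagonal (RCLike.ofReal ∘ hHerm.eigenvalues) := h
      _ = Matrix.diagonal eig := by
          have hfun : (RCLike.ofReal ∘ hHerm.eigenvalues : Fin n → ℝ) = eig := by
            funext i
            simp [RCLike.ofReal_real_eq_id]
            rfl
          rw [hfun]
  set w : Fin n → ℝ := fun i => (s i)⁻¹ with hw
  set U : Matrix (Fin n) (Fin n) ℝ := B * V * Matrix.diagonal w with hUdef
  have hUtU : Uᵀ * U = 1 := by
    rw [hUdef]
    simp only [transpose_mul, Matrix.diagonal_transpose]
    calc Matrix.diagonal w * (Vᵀ * Bᵀ) * (B * V * Matrix.diagonal w)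
        = Matrix.diagonal w * (Vᵀ * (Bᵀ * B) * V) * Matrix.diagonal w := by noncomm_ring
      _ = Matrix.diagonal w * Matrix.diagonal eig * Matrix.diagonal w := by rw [hdiag]
      _ = 1 := by
          rw [Matrix.diagonal_mul_diagonal, Matrix.diagonal_mul_diagonal]
          have hfun : (fun i => w i * eig i * w i) = fun _ => (1 : ℝ) := by
            funext i
            have h1 : s i ≠ 0 := (hspos i).ne'
            have h2 : eig i = s i * s i := by rw [← hssq i]; ring
            show w i * eig i * w i = 1
            rw [h2]
            show (s i)⁻¹ * (s i * s i) * (s i)⁻¹ = 1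
            field_simp
          rw [hfun, Matrix.diagonal_one]
  have hUUt : U * Uᵀ = 1 := mul_eq_one_comm.mp hUtU
  have hBsvd : B = U * Matrix.diagonal s * Vᵀ := by
    rw [hUdef]
    calc B = B * V * Vᵀ := by rw [Matrix.mul_assoc, hVVt, Matrix.mul_one]
      _ = B * V * (Matrix.diagonal w * Matrix.diagonal s) * Vᵀ := by
          rw [Matrix.diagonal_mul_diagonal, show (fun i => w i * s i) = fun _ => (1:ℝ) from ?_,
            Matrix.diagonal_one, Matrix.mul_one]
          funext i
          exact inv_mul_cancel₀ (hspos i).ne'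
      _ = B * V * Matrix.diagonal w * Matrix.diagonal s * Vᵀ := by noncomm_ring
  have hBtB : Bᵀ * B = V * Matrix.diagonal eig * Vᵀ := by
    calc Bᵀ * B = (V * Vᵀ) * (Bᵀ * B) * (V * Vᵀ) := by rw [hVVt]; simp
      _ = V * (Vᵀ * (Bᵀ * B) * V) * Vᵀ := by noncomm_ring
      _ = V * Matrix.diagonal eig * Vᵀ := by rw [hdiag]
  have hfB : frobSq B = ∑ i, eig i := by
    rw [frobSq_eq_trace, hBtB, Matrix.trace_mul_comm, ← Matrix.mul_assoc, hVtV, Matrix.one_mul,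
      Matrix.trace_diagonal]
  -- row and column norms
  have hUrow : ∀ i, ∑ m, U i m ^ 2 = 1 := by
    intro i
    have h := congrFun (congrFun hUUt i) i
    simp only [Matrix.mul_apply, Matrix.transpose_apply, Matrix.one_apply_eq] at h
    calc ∑ m, U i m ^ 2 = ∑ m, U i m * U i m := Finset.sum_congr rfl fun m _ => pow_two _
      _ = 1 := h
  have hUcol : ∀ m, ∑ i, U i m ^ 2 = 1 := by
    intro m
    have h := congrFun (congrFun hUtU m) m
    simp only [Matrix.mul_apply, Matrix.transpose_apply, Matrix.one_apply_eq] at h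
    calc ∑ i, U i m ^ 2 = ∑ i, U i m * U i m := Finset.sum_congr rfl fun i _ => pow_two _
      _ = 1 := h
  have hVrow : ∀ i, ∑ m, V i m ^ 2 = 1 := by
    intro i
    have h := congrFun (congrFun hVVt i) i
    simp only [Matrix.mul_apply, Matrix.transpose_apply, Matrix.one_apply_eq] at h
    calc ∑ m, V i m ^ 2 = ∑ m, V i m * V i m := Finset.sum_congr rfl fun m _ => pow_two _
      _ = 1 := h
  have hVcol : ∀ m, ∑ i, V i m ^ 2 = 1 := by
    intro m
    have h := congrFun (congrFun hVtV m) m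
    simp only [Matrix.mul_apply, Matrix.transpose_apply, Matrix.one_apply_eq] at h
    calc ∑ i, V i m ^ 2 = ∑ i, V i m * V i m := Finset.sum_congr rfl fun i _ => pow_two _
      _ = 1 := h
  have hBii : ∀ i, B i i = ∑ m, s m * (U i m * V i m) := by
    intro i
    conv_lhs => rw [hBsvd]
    rw [Matrix.mul_apply]
    simp only [Matrix.mul_diagonal, Matrix.transpose_apply]
    exact Finset.sum_congr rfl fun m _ => by ring
  -- sorted singular values
  set π : Equiv.Perm (Fin n) := Tuple.sort s with hπ
  set c : Fin n → ℝ := s ∘ π with hc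
  have hcmono : Monotone c := Tuple.monotone_sort s
  have hcpos : ∀ j, 0 < c j := fun j => hspos (π j)
  have hcprod : ∏ j, c j = 1 := by
    rw [hc]
    rw [show ∏ j, (s ∘ π) j = ∏ j, s (π j) from rfl, Equiv.prod_comp π s, hsprod]
  have hcsq : ∑ j, c j ^ 2 = ∑ i, eig i := by
    have h := Equiv.sum_comp π (fun m => s m ^ 2)
    calc ∑ j, c j ^ 2 = ∑ j, s (π j) ^ 2 := rfl
      _ = ∑ m, s m ^ 2 := h
      _ = ∑ i, eig i := Finset.sum_congr rfl fun i _ => hssq i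
  -- trace bound via doubly substochastic matrix
  have htr : ∑ i, a i * B i i ≤ ∑ j, a j * c j := by
    have e1 : ∑ i, a i * B i i = ∑ i, ∑ m, a i * s m * (U i m * V i m) := by
      refine Finset.sum_congr rfl fun i _ => ?_
      rw [hBii i, Finset.mul_sum]
      exact Finset.sum_congr rfl fun m _ => by ring
    set S : Matrix (Fin n) (Fin n) ℝ := fun i m => (U i (π m) ^ 2 + V i (π m) ^ 2) / 2
      with hS
    have hS0 : ∀ i m, 0 ≤ S i m := fun i m => by positivity
    have hSrow : ∀ i, ∑ m, S i m ≤ 1 := by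
      intro i
      have h := Equiv.sum_comp π (fun m => (U i m ^ 2 + V i m ^ 2) / 2)
      have h2 : ∑ m, S i m = ∑ m, (U i m ^ 2 + V i m ^ 2) / 2 := h
      rw [h2, ← Finset.sum_div, Finset.sum_add_distrib, hUrow i, hVrow i]
      norm_num
    have hScol : ∀ m, ∑ i, S i m ≤ 1 := by
      intro m
      have h2 : ∑ i, S i m = (∑ i, U i (π m) ^ 2 + ∑ i, V i (π m) ^ 2) / 2 := by
        rw [← Finset.sum_add_distrib, ← Finset.sum_div]
      rw [h2, hUcol (π m), hVcol (π m)]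
      norm_num
    have e2 : ∀ i, ∑ m, a i * s m * (U i m * V i m) ≤ ∑ m, S i m * (a i * c m) := by
      intro i
      have h := Equiv.sum_comp π (fun m => a i * s m * (U i m * V i m))
      rw [← h]
      refine Finset.sum_le_sum fun m _ => ?_
      have hxy : U i (π m) * V i (π m) ≤ (U i (π m) ^ 2 + V i (π m) ^ 2) / 2 := by nlinarith [sq_nonneg (U i (π m) - V i (π m))]
      have hnn : 0 ≤ a i * s (π m) := mul_nonneg (hapos i).le (hspos (π m)).le
      calc a i * s (π m) * (U i (π m) * V i (π m))
          ≤ a i * s (π m) * ((U i (π m) ^ 2 + V i (π m) ^ 2) / 2) :=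
            mul_le_mul_of_nonneg_left hxy hnn
        _ = S i m * (a i * c m) := by rw [hS, hc]; simp only [Function.comp_apply]; ring
    have hds := ds_bound a c hmono hcmono (fun i => (hapos i).le) (fun j => (hcpos j).le)
      S hS0 hSrow hScol
    calc ∑ i, a i * B i i = ∑ i, ∑ m, a i * s m * (U i m * V i m) := e1
      _ ≤ ∑ i, ∑ m, S i m * (a i * c m) := Finset.sum_le_sum fun i _ => e2 i
      _ ≤ ∑ i, a i * c i := hds
  -- expansion of frobSq (diagonal a - B)
  have hexp : frobSq (Matrix.diagonal a - B)
      = ∑ j, a j ^ 2 - 2 * (∑ i, a i * B i i) + frobSq B := by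
    have h1 : ∀ i, ∑ j, ((Matrix.diagonal a - B) i j) ^ 2
        = a i ^ 2 - 2 * (a i * B i i) + ∑ j, B i j ^ 2 := by
      intro i
      have e : ∀ j, ((Matrix.diagonal a - B) i j) ^ 2
          = (Matrix.diagonal a i j) ^ 2 - 2 * (Matrix.diagonal a i j * B i j) + B i j ^ 2 := by
        intro j
        simp only [Matrix.sub_apply]
        ring
      rw [Finset.sum_congr rfl fun j _ => e j]
      rw [Finset.sum_add_distrib, Finset.sum_sub_distrib]
      congr 2
      · rw [Finset.sum_eq_single i]
        · rw [Matrix.diagonal_apply_eq]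
        · intro j _ hj
          rw [Matrix.diagonal_apply_ne a (Ne.symm hj)]
          ring
        · intro h; exact absurd (Finset.mem_univ i) h
      · rw [← Finset.mul_sum, Finset.sum_eq_single i]
        · rw [Matrix.diagonal_apply_eq]
        · intro j _ hj
          rw [Matrix.diagonal_apply_ne a (Ne.symm hj)]
          ring
        · intro h; exact absurd (Finset.mem_univ i) h
    calc frobSq (Matrix.diagonal a - B) = ∑ i, ∑ j, ((Matrix.diagonal a - B) i j) ^ 2 := rfl
      _ = ∑ i, (a i ^ 2 - 2 * (a i * B i i) + ∑ j, B i j ^ 2) :=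
          Finset.sum_congr rfl fun i _ => h1 i
      _ = ∑ j, a j ^ 2 - 2 * (∑ i, a i * B i i) + frobSq B := by
          rw [Finset.sum_add_distrib, Finset.sum_sub_distrib, ← Finset.mul_sum]
          rfl
  refine ⟨c, hcmono, hcpos, hcprod, ?_⟩
  have hE1 : ∑ j, (c j - a j) ^ 2
      = ∑ j, c j ^ 2 - 2 * (∑ j, a j * c j) + ∑ j, a j ^ 2 := by
    have e : ∀ j, (c j - a j) ^ 2 = c j ^ 2 - 2 * (a j * c j) + a j ^ 2 := fun j => by ring
    rw [Finset.sum_congr rfl fun j _ => e j, Finset.sum_add_distrib, Finset.sum_sub_distrib,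
      ← Finset.mul_sum]
  rw [hE1, hexp, hfB, ← hcsq]
  linarith [htr]


lemma exists_min (a : Fin n → ℝ) (hmono : Monotone a) :
    ∃ d : Fin n → ℝ, Monotone d ∧ (∀ j, 0 < d j) ∧ (∏ j, d j) = 1 ∧
      ∑ j, (d j - a j) ^ 2
        = sInf {r : ℝ | ∃ c : Fin n → ℝ, (∀ j, 0 < c j) ∧ (∏ j, c j) = 1 ∧
            r = ∑ j, (c j - a j) ^ 2} := by
  classical
  set T : Set ℝ := {r : ℝ | ∃ c : Fin n → ℝ, (∀ j, 0 < c j) ∧ (∏ j, c j) = 1 ∧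
      r = ∑ j, (c j - a j) ^ 2} with hT
  set f : (Fin n → ℝ) → ℝ := fun c => ∑ j, (c j - a j) ^ 2 with hf
  have hfnonneg : ∀ c, 0 ≤ f c := fun c => Finset.sum_nonneg fun j _ => sq_nonneg _
  have hcont : Continuous f := by
    apply continuous_finset_sum
    intro j _
    exact ((continuous_apply j).sub continuous_const).pow 2
  set R : ℝ := f (fun _ => 1) with hR
  set K : Set (Fin n → ℝ) :=
    {c | (∀ j, 0 ≤ c j) ∧ (∏ j, c j) = 1 ∧ f c ≤ R} with hK
  have hKclosed : IsClosed K := by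
    have h1 : IsClosed {c : Fin n → ℝ | ∀ j, 0 ≤ c j} := by
      have he : {c : Fin n → ℝ | ∀ j, 0 ≤ c j} = ⋂ j, {c | 0 ≤ c j} := by
        ext c; simp
      rw [he]
      exact isClosed_iInter fun j => isClosed_le continuous_const (continuous_apply j)
    have h2 : IsClosed {c : Fin n → ℝ | (∏ j, c j) = 1} :=
      isClosed_eq (continuous_finset_prod _ fun j _ => continuous_apply j) continuous_const
    have h3 : IsClosed {c : Fin n → ℝ | f c ≤ R} := isClosed_le hcont continuous_const
    have he : K = {c : Fin n → ℝ | ∀ j, 0 ≤ c j}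
        ∩ ({c : Fin n → ℝ | (∏ j, c j) = 1} ∩ {c : Fin n → ℝ | f c ≤ R}) := by
      ext c; simp [hK, Set.mem_setOf_eq, and_assoc]
    rw [he]
    exact h1.inter (h2.inter h3)
  have hRnn : 0 ≤ R := hfnonneg _
  have hKbdd : Bornology.IsBounded K := by
    rw [isBounded_iff_forall_norm_le]
    refine ⟨‖a‖ + Real.sqrt R, fun c hc => ?_⟩
    have hnn : 0 ≤ ‖a‖ + Real.sqrt R := by positivity
    rw [pi_norm_le_iff_of_nonneg hnn]
    intro j
    have h1 : (c j - a j) ^ 2 ≤ f c :=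
      Finset.single_le_sum (fun i _ => sq_nonneg (c i - a i)) (Finset.mem_univ j)
    have h2 : (c j - a j) ^ 2 ≤ R := h1.trans hc.2.2
    have h3 : |c j - a j| ≤ Real.sqrt R := by
      rw [← Real.sqrt_sq_eq_abs]
      exact Real.sqrt_le_sqrt h2
    have h4 : |a j| ≤ ‖a‖ := by
      have := norm_le_pi_norm a j
      simpa using this
    calc ‖c j‖ = |c j| := rfl
      _ ≤ |c j - a j| + |a j| := by
          have h := abs_add_le (c j - a j) (a j)
          simpa using h
      _ ≤ ‖a‖ + Real.sqrt R := by linarith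
  have hKcompact : IsCompact K := Metric.isCompact_of_isClosed_isBounded hKclosed hKbdd
  have hKne : K.Nonempty := by
    refine ⟨fun _ => 1, fun j => zero_le_one, ?_, le_refl _⟩
    simp
  obtain ⟨d0, hd0K, hd0min⟩ := hKcompact.exists_isMinOn hKne hcont.continuousOn
  obtain ⟨hd0nn, hd0prod, hd0R⟩ := hd0K
  have hd0pos : ∀ j, 0 < d0 j := by
    intro j
    rcases (hd0nn j).lt_or_eq with h | h
    · exact h
    · exfalso
      have h0 : ∏ i, d0 i = 0 := Finset.prod_eq_zero (Finset.mem_univ j) h.symm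
      rw [hd0prod] at h0; norm_num at h0
  have hTbdd : BddBelow T := by
    refine ⟨0, fun r hr => ?_⟩
    obtain ⟨c, _, _, hrc⟩ := hr
    rw [hrc]
    exact Finset.sum_nonneg fun j _ => sq_nonneg _
  have hTmem : f d0 ∈ T := ⟨d0, hd0pos, hd0prod, rfl⟩
  have hTne : T.Nonempty := ⟨f d0, hTmem⟩
  have hfd0 : f d0 = sInf T := by
    refine le_antisymm (le_csInf hTne ?_) (csInf_le hTbdd hTmem)
    rintro r ⟨c, hcpos, hcprod, rfl⟩
    rcases le_or_gt (f c) R with h | h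
    · exact hd0min ⟨fun j => (hcpos j).le, hcprod, h⟩
    · exact hd0R.trans h.le
  -- sort d0
  set σ : Equiv.Perm (Fin n) := Tuple.sort d0 with hσ
  set d : Fin n → ℝ := d0 ∘ σ with hd
  have hdmono : Monotone d := Tuple.monotone_sort d0
  have hdpos : ∀ j, 0 < d j := fun j => hd0pos (σ j)
  have hdprod : ∏ j, d j = 1 := by
    rw [hd]
    rw [show ∏ j, (d0 ∘ σ) j = ∏ j, d0 (σ j) from rfl, Equiv.prod_comp σ d0, hd0prod]
  have hrearr : ∑ j, d0 j * a j ≤ ∑ j, d j * a j := by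
    have hmv : Monovary d a := hdmono.monovary hmono
    have h := hmv.sum_comp_perm_mul_le_sum_mul (σ := σ⁻¹)
    have he : ∀ j, d (σ⁻¹ j) = d0 j := by
      intro j
      rw [hd]
      simp
    calc ∑ j, d0 j * a j = ∑ j, d (σ⁻¹ j) * a j :=
          Finset.sum_congr rfl fun j _ => by rw [he j]
      _ ≤ ∑ j, d j * a j := h
  have expand : ∀ u : Fin n → ℝ,
      ∑ j, (u j - a j) ^ 2 = ∑ j, u j ^ 2 - 2 * ∑ j, u j * a j + ∑ j, a j ^ 2 := by
    intro u
    have e : ∀ j, (u j - a j) ^ 2 = u j ^ 2 - 2 * (u j * a j) + a j ^ 2 := fun j => by ring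
    rw [Finset.sum_congr rfl fun j _ => e j, Finset.sum_add_distrib, Finset.sum_sub_distrib,
      ← Finset.mul_sum]
  have hsumsq : ∑ j, d j ^ 2 = ∑ j, d0 j ^ 2 := by
    rw [hd]
    exact Equiv.sum_comp σ (fun j => d0 j ^ 2)
  have hfd_le : f d ≤ f d0 := by
    rw [hf]
    simp only []
    rw [expand d, expand d0, hsumsq]
    linarith [hrearr]
  have hfd : f d = sInf T := by
    refine le_antisymm (hfd0 ▸ hfd_le) (csInf_le hTbdd ⟨d, hdpos, hdprod, rfl⟩)
  exact ⟨d, hdmono, hdpos, hdprod, hfd⟩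


lemma frobSq_diagonal (v : Fin n → ℝ) : frobSq (Matrix.diagonal v) = ∑ i, v i ^ 2 := by
  unfold frobSq
  refine Finset.sum_congr rfl fun i _ => ?_
  rw [Finset.sum_eq_single i]
  · rw [Matrix.diagonal_apply_eq]
  · intro j _ hj
    rw [Matrix.diagonal_apply_ne v (Ne.symm hj)]
    ring
  · intro h; exact absurd (Finset.mem_univ i) h

end SL7

theorem stmt_7 (n : ℕ) (hn : 1 ≤ n) (A : Matrix (Fin n) (Fin n) ℝ) (hdet : 0 < A.det)
    (a : Fin n → ℝ) (hapos : ∀ i, 0 < a i) (hmono : Monotone a)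
    -- `a` consists of the singular values of `A` (in increasing order): the squares
    -- `a i ^ 2` are the eigenvalues of `A * Aᵀ`, diagonalized by an orthogonal matrix.
    (M : Matrix (Fin n) (Fin n) ℝ) (hM : Mᵀ * M = 1) (hM' : M * Mᵀ = 1)
    (hsv : Mᵀ * (A * Aᵀ) * M = Matrix.diagonal (fun i => a i ^ 2)) :
    distSL A ^ 2 =
      sInf {r : ℝ | ∃ c : Fin n → ℝ, (∀ j, 0 < c j) ∧ (∏ j, c j) = 1 ∧
        r = ∑ j, (c j - a j) ^ 2} ∧
    ∃ d : Fin n → ℝ, Monotone d ∧ (∀ j, 0 < d j) ∧ (∏ j, d j) = 1 ∧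
      ∑ j, (d j - a j) ^ 2 = distSL A ^ 2 := by
  classical
  open SL7 in
  set Dinv : Matrix (Fin n) (Fin n) ℝ := Matrix.diagonal (fun i => (a i)⁻¹) with hDinv
  set N : Matrix (Fin n) (Fin n) ℝ := Aᵀ * M * Dinv with hN
  have hNt : Nᵀ = Dinv * (Mᵀ * A) := by
    rw [hN, transpose_mul, transpose_mul, Matrix.transpose_transpose, hDinv,
      Matrix.diagonal_transpose]
  have hNtN : Nᵀ * N = 1 := by
    rw [hNt, hN]
    calc Dinv * (Mᵀ * A) * (Aᵀ * M * Dinv)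
        = Dinv * (Mᵀ * (A * Aᵀ) * M) * Dinv := by noncomm_ring
      _ = Dinv * Matrix.diagonal (fun i => a i ^ 2) * Dinv := by rw [hsv]
      _ = 1 := by
          rw [hDinv, Matrix.diagonal_mul_diagonal, Matrix.diagonal_mul_diagonal]
          have hfun : (fun i => (a i)⁻¹ * a i ^ 2 * (a i)⁻¹) = fun _ => (1 : ℝ) := by
            funext i
            have : a i ≠ 0 := (hapos i).ne'
            field_simp
          rw [hfun, Matrix.diagonal_one]
  have hNNt : N * Nᵀ = 1 := mul_eq_one_comm.mp hNtN
  have hAsvd : A = M * Matrix.diagonal a * Nᵀ := by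
    rw [hNt]
    calc A = M * Mᵀ * A := by rw [hM', Matrix.one_mul]
      _ = M * (Matrix.diagonal a * Dinv) * (Mᵀ * A) := by
          rw [hDinv, Matrix.diagonal_mul_diagonal]
          have hfun : (fun i => a i * (a i)⁻¹) = fun _ => (1 : ℝ) := by
            funext i
            exact mul_inv_cancel₀ (hapos i).ne'
          rw [hfun, Matrix.diagonal_one, Matrix.mul_one, Matrix.mul_assoc]
      _ = M * Matrix.diagonal a * (Dinv * (Mᵀ * A)) := by noncomm_ring
  have hprodA : 0 < ∏ i, a i := Finset.prod_pos fun i _ => hapos i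
  have hdetMN : M.det * N.det = 1 := by
    have h1 : A.det = M.det * N.det * ∏ i, a i := by
      conv_lhs => rw [hAsvd]
      rw [det_mul, det_mul, det_transpose, det_diagonal]
      ring
    have h2 : (M.det * N.det) ^ 2 = 1 := by
      have hm : M.det * M.det = 1 := by
        have := congrArg Matrix.det hM
        rwa [det_mul, det_transpose, det_one] at this
      have hnn : N.det * N.det = 1 := by
        have := congrArg Matrix.det hNtN
        rwa [det_mul, det_transpose, det_one] at this
      nlinarith [hm, hnn]
    have h3 : 0 < M.det * N.det := by
      by_contra hcon
      push_neg at hcon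
      nlinarith [h1, hprodA, hdet]
    nlinarith [h2, h3]
  have hsets : {r : ℝ | ∃ B : Matrix (Fin n) (Fin n) ℝ, B.det = 1 ∧ r = frob (A - B)}
      = {r : ℝ | ∃ B : Matrix (Fin n) (Fin n) ℝ, B.det = 1 ∧
          r = frob (Matrix.diagonal a - B)} := by
    ext r
    constructor
    · rintro ⟨B, hB, rfl⟩
      refine ⟨Mᵀ * B * N, ?_, ?_⟩
      · rw [det_mul, det_mul, det_transpose, hB, mul_one]
        exact hdetMN
      · have hfact : A - B = M * (Matrix.diagonal a - Mᵀ * B * N) * Nᵀ := by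
          rw [Matrix.mul_sub, Matrix.sub_mul, ← hAsvd]
          congr 1
          symm
          calc M * (Mᵀ * B * N) * Nᵀ = M * Mᵀ * B * (N * Nᵀ) := by noncomm_ring
            _ = B := by rw [hM', hNNt, Matrix.one_mul, Matrix.mul_one]
        rw [hfact, frob_eq_sqrt, frob_eq_sqrt]
        congr 1
        rw [Matrix.mul_assoc, frobSq_mul_left hM]
        have hU : Nᵀ * Nᵀᵀ = 1 := by rw [Matrix.transpose_transpose]; exact hNtN
        exact frobSq_mul_right hU
    · rintro ⟨B', hB', rfl⟩
      refine ⟨M * B' * Nᵀ, ?_, ?_⟩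
      · rw [det_mul, det_mul, det_transpose, hB', mul_one]
        exact hdetMN
      · have hfact : A - M * B' * Nᵀ = M * (Matrix.diagonal a - B') * Nᵀ := by
          rw [Matrix.mul_sub, Matrix.sub_mul, ← hAsvd]
        rw [hfact, frob_eq_sqrt, frob_eq_sqrt]
        congr 1
        rw [Matrix.mul_assoc, frobSq_mul_left hM]
        have hU : Nᵀ * Nᵀᵀ = 1 := by rw [Matrix.transpose_transpose]; exact hNtN
        exact (frobSq_mul_right hU).symm
  have hdist : distSL A
      = sInf {r : ℝ | ∃ B : Matrix (Fin n) (Fin n) ℝ, B.det = 1 ∧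
          r = frob (Matrix.diagonal a - B)} := by
    rw [distSL, hsets]
  set T : Set ℝ := {r : ℝ | ∃ c : Fin n → ℝ, (∀ j, 0 < c j) ∧ (∏ j, c j) = 1 ∧
      r = ∑ j, (c j - a j) ^ 2} with hT
  obtain ⟨d, hdmono, hdpos, hdprod, hdmin⟩ := exists_min a hmono
  have hTbdd : BddBelow T := by
    refine ⟨0, fun r hr => ?_⟩
    obtain ⟨c, _, _, hrc⟩ := hr
    rw [hrc]
    exact Finset.sum_nonneg fun j _ => sq_nonneg _
  have hsInfT : 0 ≤ sInf T := by
    rw [← hdmin]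
    exact Finset.sum_nonneg fun j _ => sq_nonneg _
  set SD : Set ℝ := {r : ℝ | ∃ B : Matrix (Fin n) (Fin n) ℝ, B.det = 1 ∧
      r = frob (Matrix.diagonal a - B)} with hSD
  have hlowmem : ∀ r ∈ SD, Real.sqrt (sInf T) ≤ r := by
    rintro r ⟨B, hB, rfl⟩
    obtain ⟨c, hcmono, hcpos, hcprod, hcle⟩ := key_c a hapos hmono B hB
    have h1 : sInf T ≤ ∑ j, (c j - a j) ^ 2 := csInf_le hTbdd ⟨c, hcpos, hcprod, rfl⟩
    have h2 : sInf T ≤ frob (Matrix.diagonal a - B) ^ 2 := by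
      rw [frob_sq]
      exact h1.trans hcle
    calc Real.sqrt (sInf T) ≤ Real.sqrt (frob (Matrix.diagonal a - B) ^ 2) :=
          Real.sqrt_le_sqrt h2
      _ = frob (Matrix.diagonal a - B) := Real.sqrt_sq (frob_nonneg _)
  have hdd : frob (Matrix.diagonal a - Matrix.diagonal d) = Real.sqrt (sInf T) := by
    rw [frob_eq_sqrt]
    congr 1
    rw [Matrix.diagonal_sub, frobSq_diagonal, ← hdmin]
    refine Finset.sum_congr rfl fun j _ => ?_
    ring
  have hmemSD : frob (Matrix.diagonal a - Matrix.diagonal d) ∈ SD := by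
    refine ⟨Matrix.diagonal d, ?_, rfl⟩
    rw [det_diagonal]
    exact hdprod
  have hSDne : SD.Nonempty := ⟨_, hmemSD⟩
  have hSDbdd : BddBelow SD := ⟨Real.sqrt (sInf T), hlowmem⟩
  have hinfSD : sInf SD = Real.sqrt (sInf T) := by
    refine le_antisymm ?_ (le_csInf hSDne hlowmem)
    calc sInf SD ≤ frob (Matrix.diagonal a - Matrix.diagonal d) := csInf_le hSDbdd hmemSD
      _ = Real.sqrt (sInf T) := hdd
  have hmain : distSL A ^ 2 = sInf T := by
    rw [hdist, hinfSD, Real.sq_sqrt hsInfT]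
  exact ⟨hmain, d, hdmono, hdpos, hdprod, by rw [hmain]; exact hdmin⟩

end
end

section
/- Let A be a real n×n matrix with det A > 0 (in particular A is invertible). Then dist(A, SL(n)) ≤ (1/‖A^{−1}‖) |1 − 1/det A| ≤ (√n / |A^{−1}|) |1 − 1/det A|, where ‖·‖ is the operator norm and |·| the Frobenius norm. -/
open Matrix

noncomputable section

/-- Operator norm of a real square matrix: `sup` of `|Av|` over unit vectors `v`. -/
def opnorm {n : ℕ} (A : Matrix (Fin n) (Fin n) ℝ) : ℝ :=
  sSup {r : ℝ | ∃ v : EuclideanSpace ℝ (Fin n), ‖v‖ = 1 ∧ r = ‖Matrix.toEuclideanLin A v‖}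

lemma enorm_eq {n : ℕ} (x : Fin n → ℝ) :
    ‖(WithLp.equiv 2 (Fin n → ℝ)).symm x‖ = Real.sqrt (∑ i, x i ^ 2) := by
  rw [EuclideanSpace.norm_eq]
  congr 1; exact Finset.sum_congr rfl fun i _ => by
    rw [Real.norm_eq_abs, sq_abs]; rfl

lemma opnorm_bdd {n : ℕ} (M : Matrix (Fin n) (Fin n) ℝ) :
    BddAbove {r : ℝ | ∃ v : EuclideanSpace ℝ (Fin n), ‖v‖ = 1 ∧ r = ‖Matrix.toEuclideanLin M v‖} := by
  refine ⟨‖(Matrix.toEuclideanLin M).toContinuousLinearMap‖, ?_⟩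
  rintro r ⟨v, hv, rfl⟩
  calc ‖Matrix.toEuclideanLin M v‖ = ‖(Matrix.toEuclideanLin M).toContinuousLinearMap v‖ := rfl
    _ ≤ ‖(Matrix.toEuclideanLin M).toContinuousLinearMap‖ * ‖v‖ :=
        (Matrix.toEuclideanLin M).toContinuousLinearMap.le_opNorm v
    _ = _ := by rw [hv, mul_one]

lemma opnorm_ge {n : ℕ} (M : Matrix (Fin n) (Fin n) ℝ) {v : EuclideanSpace ℝ (Fin n)}
    (hv : ‖v‖ = 1) : ‖Matrix.toEuclideanLin M v‖ ≤ opnorm M :=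
  le_csSup (opnorm_bdd M) ⟨v, hv, rfl⟩

lemma opnorm_attained {n : ℕ} (hn : 1 ≤ n) (M : Matrix (Fin n) (Fin n) ℝ) :
    ∃ v : EuclideanSpace ℝ (Fin n), ‖v‖ = 1 ∧ ‖Matrix.toEuclideanLin M v‖ = opnorm M := by
  have : Fin n := ⟨0, hn⟩
  have hmem : (EuclideanSpace.single this (1:ℝ)) ∈ Metric.sphere (0 : EuclideanSpace ℝ (Fin n)) 1 := by
    simp [EuclideanSpace.norm_single]
  have hcompact : IsCompact (Metric.sphere (0 : EuclideanSpace ℝ (Fin n)) 1) :=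
    isCompact_sphere 0 1
  have hcont : Continuous fun v : EuclideanSpace ℝ (Fin n) =>
      ‖(Matrix.toEuclideanLin M).toContinuousLinearMap v‖ :=
    ((Matrix.toEuclideanLin M).toContinuousLinearMap.continuous).norm
  obtain ⟨x, hx, hmax⟩ := hcompact.exists_isMaxOn ⟨_, hmem⟩ hcont.continuousOn
  have hx1 : ‖x‖ = 1 := by simpa using hx
  refine ⟨x, hx1, le_antisymm (opnorm_ge M hx1) ?_⟩
  refine csSup_le ⟨‖Matrix.toEuclideanLin M x‖, x, hx1, rfl⟩ ?_
  rintro r ⟨v, hv, rfl⟩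
  exact hmax (by simp [hv] : v ∈ Metric.sphere (0:EuclideanSpace ℝ (Fin n)) 1)

lemma opnorm_nonneg {n : ℕ} (hn : 1 ≤ n) (M : Matrix (Fin n) (Fin n) ℝ) : 0 ≤ opnorm M := by
  obtain ⟨v, hv, h⟩ := opnorm_attained hn M
  rw [← h]; exact norm_nonneg _

/-- each column's ℓ² norm is at most the operator norm -/
lemma col_le_opnorm {n : ℕ} (M : Matrix (Fin n) (Fin n) ℝ) (j : Fin n) :
    Real.sqrt (∑ i, (M i j) ^ 2) ≤ opnorm M := by
  have h1 : ‖(EuclideanSpace.single j (1:ℝ))‖ = 1 := by simp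
  have := opnorm_ge M h1
  have heq : Matrix.toEuclideanLin M (EuclideanSpace.single j (1:ℝ)) =
      (WithLp.equiv 2 (Fin n → ℝ)).symm (M *ᵥ Pi.single j 1) := by
    rfl
  rw [heq, enorm_eq] at this
  simpa [Matrix.mulVec_single] using this

lemma frob_le {n : ℕ} (hn : 1 ≤ n) (M : Matrix (Fin n) (Fin n) ℝ) :
    frob M ≤ Real.sqrt n * opnorm M := by
  have hop := opnorm_nonneg hn M
  have hsum : ∀ j, ∑ i, (M i j) ^ 2 ≤ opnorm M ^ 2 := by
    intro j
    have := col_le_opnorm M j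
    have h0 : (0:ℝ) ≤ ∑ i, (M i j) ^ 2 := Finset.sum_nonneg fun i _ => sq_nonneg _
    calc ∑ i, (M i j) ^ 2 = Real.sqrt (∑ i, (M i j) ^ 2) ^ 2 := (Real.sq_sqrt h0).symm
      _ ≤ opnorm M ^ 2 := by
          apply pow_le_pow_left₀ (Real.sqrt_nonneg _) this
  have key : ∑ i, ∑ j, (M i j) ^ 2 ≤ (n : ℝ) * opnorm M ^ 2 := by
    rw [Finset.sum_comm]
    calc ∑ j, ∑ i, (M i j) ^ 2 ≤ ∑ _j : Fin n, opnorm M ^ 2 :=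
          Finset.sum_le_sum fun j _ => hsum j
      _ = (n : ℝ) * opnorm M ^ 2 := by simp [Finset.sum_const, mul_comm]
  calc frob M ≤ Real.sqrt ((n : ℝ) * opnorm M ^ 2) := Real.sqrt_le_sqrt key
    _ = Real.sqrt n * opnorm M := by
        rw [Real.sqrt_mul (Nat.cast_nonneg n), Real.sqrt_sq hop]

lemma enorm_eq' {n : ℕ} (v : EuclideanSpace ℝ (Fin n)) :
    ‖v‖ = Real.sqrt (∑ i, (v i) ^ 2) := by
  rw [EuclideanSpace.norm_eq]
  congr 1; exact Finset.sum_congr rfl fun i _ => by rw [Real.norm_eq_abs, sq_abs]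

lemma frob_pos {n : ℕ} {M : Matrix (Fin n) (Fin n) ℝ} (hM : M ≠ 0) : 0 < frob M := by
  rw [frob, Real.sqrt_pos]
  obtain ⟨i, j, hij⟩ : ∃ i j, M i j ≠ 0 := by
    by_contra h
    push_neg at h
    exact hM (by ext i j; simpa using h i j)
  have hterm : 0 < ∑ j, (M i j) ^ 2 :=
    Finset.sum_pos' (fun k _ => sq_nonneg _) ⟨j, Finset.mem_univ j, by positivity⟩
  exact Finset.sum_pos' (fun k _ => Finset.sum_nonneg fun l _ => sq_nonneg _)
    ⟨i, Finset.mem_univ i, hterm⟩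

theorem stmt_8 (n : ℕ) (hn : 1 ≤ n) (A : Matrix (Fin n) (Fin n) ℝ) (hdet : 0 < A.det) :
    distSL A ≤ (opnorm A⁻¹)⁻¹ * |1 - (A.det)⁻¹| ∧
    (opnorm A⁻¹)⁻¹ * |1 - (A.det)⁻¹| ≤ (Real.sqrt n / frob A⁻¹) * |1 - (A.det)⁻¹| := by
  have : Nonempty (Fin n) := ⟨⟨0, hn⟩⟩
  have hdet0 : A.det ≠ 0 := ne_of_gt hdet
  have hAinv_ne : A⁻¹ ≠ 0 := by
    intro h
    have : A⁻¹.det = 0 := by rw [h, Matrix.det_zero]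
    rw [Matrix.det_nonsing_inv] at this
    exact hdet0 (by simpa using this)
  have hfrob : 0 < frob A⁻¹ := frob_pos hAinv_ne
  have hfle := frob_le hn A⁻¹
  have hop : 0 < opnorm A⁻¹ := by
    rcases lt_or_eq_of_le (opnorm_nonneg hn A⁻¹) with h | h
    · exact h
    · exfalso; rw [← h] at hfle; simp at hfle; linarith
  constructor
  · -- main distance bound
    set t := opnorm A⁻¹ with ht
    set c := 1 - (A.det)⁻¹ with hc
    obtain ⟨u, hu1, hut⟩ := opnorm_attained hn A⁻¹
    set x : Fin n → ℝ := A⁻¹ *ᵥ (WithLp.equiv 2 (Fin n → ℝ) u) with hx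
    have hxnorm : Real.sqrt (∑ i, x i ^ 2) = t := by
      rw [← enorm_eq x]
      exact hut
    have hxsum : ∑ i, x i ^ 2 = t ^ 2 := by
      have h0 : (0:ℝ) ≤ ∑ i, x i ^ 2 := Finset.sum_nonneg fun i _ => sq_nonneg _
      rw [← hxnorm, Real.sq_sqrt h0]
    set v : Fin n → ℝ := t⁻¹ • x with hv
    have hvsum : ∑ i, v i ^ 2 = 1 := by
      simp only [hv, Pi.smul_apply, smul_eq_mul, mul_pow, ← Finset.mul_sum, hxsum]
      field_simp
    have hAv : A *ᵥ v = t⁻¹ • (WithLp.equiv 2 (Fin n → ℝ) u) := by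
      rw [hv, Matrix.mulVec_smul, hx, Matrix.mulVec_mulVec,
        Matrix.mul_nonsing_inv A (isUnit_iff_ne_zero.mpr hdet0), Matrix.one_mulVec]
    have hAvsum : ∑ i, (A *ᵥ v) i ^ 2 = t⁻¹ ^ 2 := by
      have husum : ∑ i, (WithLp.equiv 2 (Fin n → ℝ) u i) ^ 2 = 1 := by
        have := enorm_eq' u
        rw [hu1] at this
        have h0 : (0:ℝ) ≤ ∑ i, (u i) ^ 2 := Finset.sum_nonneg fun i _ => sq_nonneg _
        have : Real.sqrt (∑ i, (u i) ^ 2) = 1 := this.symm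
        have := congrArg (· ^ 2) this
        simpa [Real.sq_sqrt h0] using this
      simp only [hAv, Pi.smul_apply, smul_eq_mul, mul_pow, ← Finset.mul_sum, husum, mul_one]
    -- the approximating matrix
    set B : Matrix (Fin n) (Fin n) ℝ :=
      A - c • (Matrix.replicateCol Unit (A *ᵥ v) * Matrix.replicateRow Unit v) with hB
    have hdetB : B.det = 1 := by
      have hfactor : B = A * (1 + Matrix.replicateCol Unit (-c • v) * Matrix.replicateRow Unit v) := by
        have h1 : A *ᵥ (-c • v) = -c • (A *ᵥ v) := Matrix.mulVec_smul A (-c) v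
        have h2 : Matrix.replicateCol Unit (-c • (A *ᵥ v)) = (-c) • Matrix.replicateCol Unit (A *ᵥ v) := by
          ext i k; simp [Matrix.replicateCol_apply]
        rw [hB, Matrix.mul_add, Matrix.mul_one, ← Matrix.mul_assoc, ← Matrix.replicateCol_mulVec,
          h1, h2, Matrix.smul_mul, neg_smul, ← sub_eq_add_neg]
      rw [hfactor, Matrix.det_mul, Matrix.det_one_add_replicateCol_mul_replicateRow]
      have hdot : v ⬝ᵥ (-c • v) = -c := by
        simp only [dotProduct, Pi.smul_apply, smul_eq_mul]
        have : ∑ i, v i * (-c * v i) = -c * ∑ i, v i ^ 2 := by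
          rw [Finset.mul_sum]; exact Finset.sum_congr rfl fun i _ => by ring
        rw [this, hvsum, mul_one]
      rw [hdot]
      have : (1 : ℝ) + -c = (A.det)⁻¹ := by rw [hc]; ring
      rw [this, mul_inv_cancel₀ hdet0]
    have hdiff : A - B = c • (Matrix.replicateCol Unit (A *ᵥ v) * Matrix.replicateRow Unit v) := by
      rw [hB, sub_sub_cancel]
    have hfrobdiff : frob (A - B) = t⁻¹ * |c| := by
      rw [hdiff, frob]
      have hentry : ∀ i j, ((c • (Matrix.replicateCol Unit (A *ᵥ v) * Matrix.replicateRow Unit v)) i j) ^ 2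
          = c ^ 2 * ((A *ᵥ v) i ^ 2 * v j ^ 2) := by
        intro i j
        have : (Matrix.replicateCol Unit (A *ᵥ v) * Matrix.replicateRow Unit v) i j = (A *ᵥ v) i * v j := by
          simp [Matrix.mul_apply, Matrix.replicateCol_apply, Matrix.replicateRow_apply]
        simp only [Matrix.smul_apply, this, smul_eq_mul]; ring
      have : ∑ i, ∑ j, ((c • (Matrix.replicateCol Unit (A *ᵥ v) * Matrix.replicateRow Unit v)) i j) ^ 2
          = c ^ 2 * (t⁻¹ ^ 2) := by
        simp only [hentry, ← Finset.mul_sum, hvsum, mul_one, hAvsum]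
      rw [this, Real.sqrt_mul (sq_nonneg c), Real.sqrt_sq_eq_abs, Real.sqrt_sq_eq_abs,
        abs_of_pos (inv_pos.mpr hop), mul_comm]
    have hmem : frob (A - B) ∈ {r : ℝ | ∃ B' : Matrix (Fin n) (Fin n) ℝ,
        B'.det = 1 ∧ r = frob (A - B')} := ⟨B, hdetB, rfl⟩
    have hbdd : BddBelow {r : ℝ | ∃ B' : Matrix (Fin n) (Fin n) ℝ,
        B'.det = 1 ∧ r = frob (A - B')} := by
      refine ⟨0, ?_⟩
      rintro r ⟨B', _, rfl⟩
      exact Real.sqrt_nonneg _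
    calc distSL A ≤ frob (A - B) := csInf_le hbdd hmem
      _ = t⁻¹ * |c| := hfrobdiff
      _ = (opnorm A⁻¹)⁻¹ * |1 - (A.det)⁻¹| := by rw [ht, hc]
  · -- comparison of the two bounds
    apply mul_le_mul_of_nonneg_right _ (abs_nonneg _)
    rw [le_div_iff₀ hfrob]
    calc (opnorm A⁻¹)⁻¹ * frob A⁻¹ ≤ (opnorm A⁻¹)⁻¹ * (Real.sqrt n * opnorm A⁻¹) :=
          mul_le_mul_of_nonneg_left hfle (by positivity)
      _ = Real.sqrt n := by
          rw [mul_comm (Real.sqrt n) (opnorm A⁻¹), ← mul_assoc, inv_mul_cancel₀ (ne_of_gt hop),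
            one_mul]

end
end

section
/- For every n ≥ 1 there exists a constant C_4 = C_4(n) > 0 such that for every θ with 0 < θ ≤ 1/2 and every real n×n matrix A with det A ≥ θ, one has (1/|A^{−1}|) |1 − 1/det A| ≤ (C_4/θ) · dist(A, SL(n)), where |·| is the Frobenius norm. -/
open Matrix

set_option maxHeartbeats 800000

noncomputable section

attribute [local instance] Matrix.frobeniusSeminormedAddCommGroup

lemma frob_eq_norm {ι : Type*} [Fintype ι] (A : Matrix ι ι ℝ) : frob A = ‖A‖ := by
  rw [Matrix.frobenius_norm_def, frob, Real.sqrt_eq_rpow]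
  congr 1
  refine Finset.sum_congr rfl fun i _ => Finset.sum_congr rfl fun j _ => ?_
  rw [Real.norm_eq_abs, show (2:ℝ) = ((2:ℕ):ℝ) by norm_num, Real.rpow_natCast, sq_abs]

lemma frob_nonneg {ι : Type*} [Fintype ι] (A : Matrix ι ι ℝ) : 0 ≤ frob A :=
  Real.sqrt_nonneg _

lemma entry_le_frob {ι : Type*} [Fintype ι] (A : Matrix ι ι ℝ) (i j : ι) :
    |A i j| ≤ frob A := by
  rw [frob, ← Real.sqrt_sq_eq_abs]
  apply Real.sqrt_le_sqrt
  calc A i j ^ 2 ≤ ∑ j', A i j' ^ 2 :=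
        Finset.single_le_sum (f := fun j' => A i j' ^ 2)
          (fun _ _ => sq_nonneg _) (Finset.mem_univ j)
    _ ≤ ∑ i', ∑ j', A i' j' ^ 2 :=
        Finset.single_le_sum (f := fun i' => ∑ j', A i' j' ^ 2)
          (fun i' _ => Finset.sum_nonneg fun _ _ => sq_nonneg _) (Finset.mem_univ i)

lemma frob_mul {ι : Type*} [Fintype ι] (X Y : Matrix ι ι ℝ) :
    frob (X * Y) ≤ frob X * frob Y := by
  rw [frob_eq_norm, frob_eq_norm, frob_eq_norm]
  exact Matrix.frobenius_norm_mul X Y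

lemma frob_sub_le {ι : Type*} [Fintype ι] (X Y : Matrix ι ι ℝ) :
    frob (X - Y) ≤ frob X + frob Y := by
  rw [frob_eq_norm, frob_eq_norm, frob_eq_norm]
  exact norm_sub_le X Y

lemma frob_one {n : ℕ} : frob (1 : Matrix (Fin n) (Fin n) ℝ) = Real.sqrt n := by
  rw [frob]
  congr 1
  have h : ∀ i j : Fin n, ((1 : Matrix (Fin n) (Fin n) ℝ) i j) ^ 2
      = if i = j then (1:ℝ) else 0 := by
    intro i j
    rw [Matrix.one_apply]
    split <;> norm_num
  simp only [h, Finset.sum_ite_eq', Finset.mem_univ, if_true]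
  simp

lemma norm_det_le_aux {n : ℕ} (m : Fin n → (Fin n → ℝ)) :
    ‖(Matrix.detRowAlternating (R := ℝ) (n := Fin n)).toMultilinearMap m‖
      ≤ (n.factorial : ℝ) * ∏ i, ‖m i‖ := by
  have e : (Matrix.detRowAlternating (R := ℝ) (n := Fin n)).toMultilinearMap m
      = (Matrix.of m).det := rfl
  rw [e, Matrix.det_apply']
  have h1 : ∀ σ : Equiv.Perm (Fin n),
      ‖(Equiv.Perm.sign σ : ℝ) * ∏ i, Matrix.of m (σ i) i‖ ≤ ∏ i, ‖m i‖ := by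
    intro σ
    rw [norm_mul]
    have hs : ‖((Equiv.Perm.sign σ : ℤ) : ℝ)‖ = 1 := by
      rcases Int.units_eq_one_or (Equiv.Perm.sign σ) with h | h <;> simp [h]
    rw [show ((Equiv.Perm.sign σ : ℝ)) = ((Equiv.Perm.sign σ : ℤ) : ℝ) by push_cast; ring, hs,
      one_mul]
    calc ‖∏ i, Matrix.of m (σ i) i‖ ≤ ∏ i, ‖m (σ i)‖ := by
          rw [norm_prod]
          exact Finset.prod_le_prod (fun _ _ => norm_nonneg _)
            (fun i _ => norm_le_pi_norm (m (σ i)) i)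
      _ = ∏ i, ‖m i‖ := Equiv.prod_comp σ (fun i => ‖m i‖)
  calc ‖∑ σ : Equiv.Perm (Fin n), (Equiv.Perm.sign σ : ℝ) * ∏ i, Matrix.of m (σ i) i‖
      ≤ ∑ σ : Equiv.Perm (Fin n), ∏ i, ‖m i‖ :=
        (norm_sum_le _ _).trans (Finset.sum_le_sum fun σ _ => h1 σ)
    _ = (n.factorial : ℝ) * ∏ i, ‖m i‖ := by
        rw [Finset.sum_const, Finset.card_univ, Fintype.card_perm, Fintype.card_fin,
          nsmul_eq_mul]

lemma rows_norm_le_frob {n : ℕ} (X : Matrix (Fin n) (Fin n) ℝ) :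
    ‖(fun i => X i : Fin n → Fin n → ℝ)‖ ≤ frob X := by
  rw [pi_norm_le_iff_of_nonneg (frob_nonneg X)]
  intro i
  rw [pi_norm_le_iff_of_nonneg (frob_nonneg X)]
  intro j
  exact entry_le_frob X i j

lemma det_lip {n : ℕ} (X Y : Matrix (Fin n) (Fin n) ℝ) :
    |X.det - Y.det| ≤ (n.factorial : ℝ) * n * max (frob X) (frob Y) ^ (n - 1)
      * frob (X - Y) := by
  have key := (Matrix.detRowAlternating (R := ℝ) (n := Fin n)).toMultilinearMap
    |>.norm_image_sub_le_of_bound (C := (n.factorial : ℝ)) (by positivity)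
      (fun m => norm_det_le_aux m) (fun i => X i) (fun i => Y i)
  have e1 : (Matrix.detRowAlternating (R := ℝ) (n := Fin n)).toMultilinearMap
      (fun i => X i) = X.det := rfl
  have e2 : (Matrix.detRowAlternating (R := ℝ) (n := Fin n)).toMultilinearMap
      (fun i => Y i) = Y.det := rfl
  rw [e1, e2, Real.norm_eq_abs] at key
  have hsub : ((fun i => X i : Fin n → Fin n → ℝ) - fun i => Y i)
      = (fun i => (X - Y) i : Fin n → Fin n → ℝ) := rfl
  rw [hsub] at key
  refine key.trans ?_
  rw [Fintype.card_fin]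
  have hmax : max ‖(fun i => X i : Fin n → Fin n → ℝ)‖ ‖(fun i => Y i : Fin n → Fin n → ℝ)‖
      ≤ max (frob X) (frob Y) :=
    max_le_max (rows_norm_le_frob X) (rows_norm_le_frob Y)
  gcongr
  · exact mul_nonneg (by positivity)
      (pow_nonneg (le_max_of_le_left (frob_nonneg X)) _)
  · exact rows_norm_le_frob (X - Y)

theorem stmt_9 (n : ℕ) (hn : 1 ≤ n) :
    ∃ C₄ : ℝ, 0 < C₄ ∧
      ∀ θ : ℝ, 0 < θ → θ ≤ 1 / 2 →
        ∀ A : Matrix (Fin n) (Fin n) ℝ, θ ≤ A.det →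
          (frob A⁻¹)⁻¹ * |1 - (A.det)⁻¹| ≤ (C₄ / θ) * distSL A := by
  set c : ℝ := (n.factorial : ℝ) * n * (Real.sqrt n + 1) ^ (n - 1) with hc
  have hc0 : 0 < c := by
    have h1 : (0:ℝ) < (n.factorial : ℝ) := by positivity
    have h2 : (0:ℝ) < (n:ℝ) := by exact_mod_cast hn
    positivity
  refine ⟨c + 1, by linarith, ?_⟩
  intro θ hθ hθ' A hA
  have ha : 0 < A.det := lt_of_lt_of_le hθ hA
  have hu : IsUnit A.det := isUnit_iff_ne_zero.mpr ha.ne'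
  have hAinv : A⁻¹ * A = 1 := Matrix.nonsing_inv_mul A hu
  set F := frob A⁻¹ with hFdef
  -- F > 0
  have hsq : (0:ℝ) < Real.sqrt n := Real.sqrt_pos.mpr (by exact_mod_cast hn)
  have hF1 : Real.sqrt n ≤ F * frob A := by
    calc Real.sqrt n = frob (1 : Matrix (Fin n) (Fin n) ℝ) := frob_one.symm
      _ = frob (A⁻¹ * A) := by rw [hAinv]
      _ ≤ F * frob A := frob_mul _ _
  have hF : 0 < F := by
    rcases lt_or_ge 0 F with h | h
    · exact h
    · exfalso
      have : F * frob A ≤ 0 := mul_nonpos_of_nonpos_of_nonneg h (frob_nonneg A)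
      linarith
  set E := |1 - (A.det)⁻¹| with hEdef
  -- main per-B bound
  have key : ∀ B : Matrix (Fin n) (Fin n) ℝ, B.det = 1 →
      θ / (c + 1) * (F⁻¹ * E) ≤ frob (A - B) := by
    intro B hB
    set d := frob (A - B) with hddef
    have hd : 0 ≤ d := frob_nonneg _
    set K := A⁻¹ * (A - B) with hKdef
    have hKval : K = 1 - A⁻¹ * B := by
      rw [hKdef, Matrix.mul_sub, hAinv]
    have h1K : (1 : Matrix (Fin n) (Fin n) ℝ) - K = A⁻¹ * B := by
      rw [hKval, sub_sub_cancel]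
    have hdet1K : ((1 : Matrix (Fin n) (Fin n) ℝ) - K).det = (A.det)⁻¹ := by
      rw [h1K, Matrix.det_mul, hB, mul_one, Matrix.det_nonsing_inv,
        Ring.inverse_eq_inv']
    have hK : frob K ≤ F * d := frob_mul _ _
    have hfK : 0 ≤ frob K := frob_nonneg _
    -- E ≤ n! * n * (√n + frob K)^(n-1) * frob K
    have hlip : E ≤ (n.factorial : ℝ) * n * (Real.sqrt n + frob K) ^ (n - 1) * frob K := by
      have h0 := det_lip (1 : Matrix (Fin n) (Fin n) ℝ) (1 - K)
      rw [Matrix.det_one, hdet1K, sub_sub_cancel, frob_one] at h0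
      refine h0.trans ?_
      have hmax : max (Real.sqrt n) (frob (1 - K)) ≤ Real.sqrt n + frob K := by
        refine max_le (by linarith) ?_
        have := frob_sub_le (1 : Matrix (Fin n) (Fin n) ℝ) K
        rw [frob_one] at this
        exact this
      gcongr
    have hθ1 : θ ≤ 1 := by linarith
    have hkey : θ * E ≤ (c + 1) * (F * d) := by
      rcases le_or_gt (frob K) 1 with hK1 | hK1
      · -- small case
        have hpow : (Real.sqrt n + frob K) ^ (n - 1) ≤ (Real.sqrt n + 1) ^ (n - 1) := by
          apply pow_le_pow_left₀ (by positivity) (by linarith)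
        have hE1 : E ≤ c * frob K := by
          refine hlip.trans ?_
          rw [hc]
          have h1 : (0:ℝ) ≤ (n.factorial : ℝ) * n := by positivity
          gcongr
        have hE2 : E ≤ c * (F * d) := hE1.trans (by gcongr)
        have hEnn : 0 ≤ E := abs_nonneg _
        have hFd : 0 ≤ F * d := mul_nonneg hF.le hd
        nlinarith
      · -- large case
        have hFd1 : 1 < F * d := lt_of_lt_of_le hK1 hK
        have hainv : (A.det)⁻¹ ≤ θ⁻¹ := by
          apply inv_anti₀ hθ hA
        have hθinv : (1:ℝ) ≤ θ⁻¹ := by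
          have := inv_anti₀ hθ (by linarith : θ ≤ 1)
          simpa using this
        have hE1 : E ≤ θ⁻¹ := by
          rw [hEdef, abs_le]
          constructor
          · have : 0 < (A.det)⁻¹ := inv_pos.mpr ha
            nlinarith
          · have : 0 < (A.det)⁻¹ := inv_pos.mpr ha
            nlinarith
        have : θ * E ≤ 1 := by
          calc θ * E ≤ θ * θ⁻¹ := by nlinarith
            _ = 1 := mul_inv_cancel₀ hθ.ne'
        nlinarith
    -- convert
    have hC : (0:ℝ) < c + 1 := by linarith
    rw [div_mul_eq_mul_div, div_le_iff₀ hC]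
    have hstep := mul_le_mul_of_nonneg_right hkey (inv_nonneg.mpr hF.le)
    have hFi : F * F⁻¹ = 1 := mul_inv_cancel₀ hF.ne'
    calc θ * (F⁻¹ * E) = θ * E * F⁻¹ := by ring
      _ ≤ (c + 1) * (F * d) * F⁻¹ := hstep
      _ = d * (c + 1) * (F * F⁻¹) := by ring
      _ = d * (c + 1) := by rw [hFi, mul_one]
  -- combine via sInf
  have hne : {r : ℝ | ∃ B : Matrix (Fin n) (Fin n) ℝ, B.det = 1 ∧ r = frob (A - B)}.Nonempty :=
    ⟨frob (A - 1), 1, Matrix.det_one, rfl⟩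
  have hlb : θ / (c + 1) * (F⁻¹ * E) ≤ distSL A := by
    apply le_csInf hne
    rintro r ⟨B, hB, rfl⟩
    exact key B hB
  have hC : (0:ℝ) < c + 1 := by linarith
  have hpos : (0:ℝ) < (c + 1) / θ := by positivity
  calc F⁻¹ * E = ((c + 1) / θ) * (θ / (c + 1) * (F⁻¹ * E)) := by
        field_simp
      _ ≤ ((c + 1) / θ) * distSL A := by
        exact mul_le_mul_of_nonneg_left hlb hpos.le

end
end

section
/- For every n ≥ 1 and every real 2n×2n matrix A, the Frobenius distance from A to sp(2n) satisfies dist(A, sp(2n)) = (1/2) |J A − (J A)ᵀ|. -/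
open Matrix

noncomputable section

lemma frob_J_mul (n : ℕ) (X : Matrix (Fin n ⊕ Fin n) (Fin n ⊕ Fin n) ℝ) :
    frob (Matrix.J (Fin n) ℝ * X) = frob X := by
  unfold frob
  congr 1
  have h1 : ∀ i j, (Matrix.J (Fin n) ℝ * X) (Sum.inl i) j = -X (Sum.inr i) j := by
    intro i j
    simp [Matrix.J, Matrix.mul_apply, Fintype.sum_sum_type, Matrix.one_apply, Matrix.neg_apply]
  have h2 : ∀ i j, (Matrix.J (Fin n) ℝ * X) (Sum.inr i) j = X (Sum.inl i) j := by
    intro i j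
    simp [Matrix.J, Matrix.mul_apply, Fintype.sum_sum_type, Matrix.one_apply]
  rw [Fintype.sum_sum_type, Fintype.sum_sum_type (f := fun i => ∑ j, (X i j) ^ 2)]
  simp only [h1, h2, neg_sq]
  exact add_comm _ _

lemma frob_smul_half {ι : Type*} [Fintype ι] (X : Matrix ι ι ℝ) :
    frob ((1/2 : ℝ) • X) = (1/2) * frob X := by
  unfold frob
  have : ∑ i, ∑ j, (((1/2 : ℝ) • X) i j) ^ 2 = (1/4) * ∑ i, ∑ j, (X i j) ^ 2 := by
    rw [Finset.mul_sum]
    refine Finset.sum_congr rfl fun i _ => ?_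
    rw [Finset.mul_sum]
    refine Finset.sum_congr rfl fun j _ => ?_
    simp [Matrix.smul_apply]
    ring
  rw [this, show (1/4 : ℝ) = (1/2)^2 by norm_num, Real.sqrt_mul (by positivity),
    Real.sqrt_sq (by norm_num)]

lemma half_frob_sub_transpose_le {ι : Type*} [Fintype ι] (Y : Matrix ι ι ℝ) :
    (1/2) * frob (Y - Yᵀ) ≤ frob Y := by
  rw [show (1/2 : ℝ) * frob (Y - Yᵀ) = frob ((1/2 : ℝ) • (Y - Yᵀ)) from
    (frob_smul_half _).symm]
  unfold frob
  apply Real.sqrt_le_sqrt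
  have key : ∑ i, ∑ j, (((1/2 : ℝ) • (Y - Yᵀ)) i j) ^ 2
      ≤ ∑ i, ∑ j, ((Y i j)^2 + (Y j i)^2) / 2 := by
    apply Finset.sum_le_sum
    intro i _
    apply Finset.sum_le_sum
    intro j _
    simp only [Matrix.smul_apply, Matrix.sub_apply, Matrix.transpose_apply, smul_eq_mul]
    nlinarith [sq_nonneg (Y i j + Y j i)]
  refine key.trans_eq ?_
  have hswap : ∑ i, ∑ j, ((Y j i)^2)/2 = ∑ i, ∑ j, ((Y i j)^2)/2 := Finset.sum_comm
  simp only [add_div, Finset.sum_add_distrib]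
  rw [hswap, ← Finset.sum_add_distrib]
  refine Finset.sum_congr rfl fun i _ => ?_
  rw [← Finset.sum_add_distrib]
  exact Finset.sum_congr rfl fun j _ => by ring

theorem stmt_19 (n : ℕ) (hn : 1 ≤ n) (A : Matrix (Fin n ⊕ Fin n) (Fin n ⊕ Fin n) ℝ) :
    sInf {r : ℝ | ∃ B : Matrix (Fin n ⊕ Fin n) (Fin n ⊕ Fin n) ℝ,
        Matrix.J (Fin n) ℝ * B = (Matrix.J (Fin n) ℝ * B)ᵀ ∧ r = frob (A - B)} =
      (1 / 2) * frob (Matrix.J (Fin n) ℝ * A - (Matrix.J (Fin n) ℝ * A)ᵀ) := by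
  set Jm := Matrix.J (Fin n) ℝ with hJm
  set M := Jm * A with hM
  set c := (1/2 : ℝ) * frob (M - Mᵀ) with hc
  -- lower bound
  have hlb : ∀ r ∈ {r : ℝ | ∃ B : Matrix (Fin n ⊕ Fin n) (Fin n ⊕ Fin n) ℝ,
      Jm * B = (Jm * B)ᵀ ∧ r = frob (A - B)}, c ≤ r := by
    rintro r ⟨B, hB, rfl⟩
    have h1 : frob (A - B) = frob (M - Jm * B) := by
      rw [← frob_J_mul n (A - B), Matrix.mul_sub, ← hM]
    have h2 : (M - Jm * B) - (M - Jm * B)ᵀ = M - Mᵀ := by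
      rw [Matrix.transpose_sub, ← hB]
      abel
    calc c = (1/2) * frob ((M - Jm * B) - (M - Jm * B)ᵀ) := by rw [h2]
      _ ≤ frob (M - Jm * B) := half_frob_sub_transpose_le _
      _ = frob (A - B) := h1.symm
  -- the minimizer
  set B₀ := -(Jm * ((1/2 : ℝ) • (M + Mᵀ))) with hB₀
  have hJB₀ : Jm * B₀ = (1/2 : ℝ) • (M + Mᵀ) := by
    rw [hB₀, Matrix.mul_neg, ← Matrix.mul_assoc, hJm, Matrix.J_squared]
    simp
  have hsym : Jm * B₀ = (Jm * B₀)ᵀ := by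
    rw [hJB₀, Matrix.transpose_smul, Matrix.transpose_add, Matrix.transpose_transpose,
      add_comm]
  have hval : frob (A - B₀) = c := by
    have h1 : Jm * (A - B₀) = (1/2 : ℝ) • (M - Mᵀ) := by
      rw [Matrix.mul_sub, hJB₀, ← hM]
      ext i j
      simp [Matrix.sub_apply, Matrix.smul_apply, Matrix.add_apply]
      ring
    rw [← frob_J_mul n (A - B₀), h1, frob_smul_half]
  have hmem : c ∈ {r : ℝ | ∃ B : Matrix (Fin n ⊕ Fin n) (Fin n ⊕ Fin n) ℝ,
      Jm * B = (Jm * B)ᵀ ∧ r = frob (A - B)} := ⟨B₀, hsym, hval.symm⟩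
  exact le_antisymm (csInf_le ⟨c, hlb⟩ hmem) (le_csInf ⟨c, hmem⟩ hlb)

end
end
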